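/- Let 𝔅 = (B,W) be a box arising from the dg construction (Lemma on boxes from differential graded tensor algebras, with Ū a projective bimodule). A morphism f : X → Y in 𝔅-mod is an isomorphism if and only if each component f_i : X(i) → Y(i) (the component on the grouplike generator ω_i) is an isomorphism of k-vector spaces. -/

import Mathlib

/-!  A minimal development of the tensor product `M ⊗_B N` over a
(possibly noncommutative) `k`-algebra `B`, where `M` is a right `B`-module
(via `Bᵐᵒᵖ`) and `N` is a left `B`-module.  It is realized as the quotient of
`M ⊗[k] N` by the balancing relations. -/

open TensorProduct MulOpposite

set_option linter.unusedSectionVars false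

section TBLib

variable (k : Type) [Field k] (B : Type) [Ring B] [Algebra k B]

variable (M N : Type)
  [AddCommGroup M] [Module k M] [Module Bᵐᵒᵖ M] [IsScalarTower k Bᵐᵒᵖ M]
  [AddCommGroup N] [Module k N] [Module B N] [IsScalarTower k B N]

/-- The balancing relations for the tensor product over `B`. -/
def balRel : Submodule k (M ⊗[k] N) :=
  Submodule.span k {x | ∃ (b : B) (m : M) (n : N), x = (op b • m) ⊗ₜ[k] n - m ⊗ₜ[k] (b • n)}

/-- The tensor product `M ⊗_B N` over the algebra `B`. -/
abbrev TB : Type := (M ⊗[k] N) ⧸ balRel k B M N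

noncomputable def TB.mk : M →ₗ[k] N →ₗ[k] TB k B M N :=
  (TensorProduct.mk k M N).compr₂ (balRel k B M N).mkQ

lemma TB.mk_def (m : M) (n : N) :
    TB.mk k B M N m n = Submodule.Quotient.mk (m ⊗ₜ[k] n) := rfl

lemma TB.mk_balance (b : B) (m : M) (n : N) :
    TB.mk k B M N (op b • m) n = TB.mk k B M N m (b • n) := by
  rw [TB.mk_def, TB.mk_def, Submodule.Quotient.eq]
  exact Submodule.subset_span ⟨b, m, n, rfl⟩

theorem TB.ind {p : TB k B M N → Prop} (h0 : p 0)
    (hmk : ∀ m n, p (TB.mk k B M N m n))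
    (hadd : ∀ x y, p x → p y → p (x + y)) : ∀ x, p x := by
  intro x
  obtain ⟨y, rfl⟩ := Submodule.Quotient.mk_surjective _ x
  induction y using TensorProduct.induction_on with
  | zero => simpa using h0
  | tmul m n => exact hmk m n
  | add a b ha hb => rw [Submodule.Quotient.mk_add]; exact hadd _ _ ha hb

theorem TB.hom_ext {P : Type} [AddCommGroup P] [Module k P]
    {f g : TB k B M N →ₗ[k] P}
    (h : ∀ m n, f (TB.mk k B M N m n) = g (TB.mk k B M N m n)) : f = g := by
  apply LinearMap.ext; intro x
  refine TB.ind k B M N (p := fun x => f x = g x) (by simp) h (fun a b ha hb => ?_) x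
  simp [map_add, ha, hb]

noncomputable def TB.lift {P : Type} [AddCommGroup P] [Module k P]
    (φ : M →ₗ[k] N →ₗ[k] P)
    (hφ : ∀ (b : B) (m : M) (n : N), φ (op b • m) n = φ m (b • n)) :
    TB k B M N →ₗ[k] P :=
  Submodule.liftQ _ (TensorProduct.lift φ) (by
    rw [balRel, Submodule.span_le]
    rintro x ⟨b, m, n, rfl⟩
    simp only [SetLike.mem_coe, LinearMap.mem_ker, map_sub, TensorProduct.lift.tmul, hφ, sub_self])

@[simp] lemma TB.lift_mk {P : Type} [AddCommGroup P] [Module k P]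
    (φ : M →ₗ[k] N →ₗ[k] P) (hφ : ∀ (b : B) (m : M) (n : N), φ (op b • m) n = φ m (b • n))
    (m : M) (n : N) :
    TB.lift k B M N φ hφ (TB.mk k B M N m n) = φ m n := rfl


section SmulLin

variable {S : Type} [Ring S] [Module S M] [SMulCommClass k S M]

/-- Scalar multiplication by `s : S` as a `k`-linear map. -/
def smulLin (s : S) : M →ₗ[k] M where
  toFun m := s • m
  map_add' a b := smul_add s a b
  map_smul' c m := (smul_comm c s m).symm

@[simp] lemma smulLin_apply (s : S) (m : M) : smulLin k M s m = s • m := rfl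

end SmulLin

section LeftAction

variable {S : Type} [Ring S] [Module S M] [SMulCommClass S Bᵐᵒᵖ M] [SMulCommClass k S M]

noncomputable def TB.lsmulHom (s : S) : TB k B M N →ₗ[k] TB k B M N :=
  TB.lift k B M N
    ((TB.mk k B M N).comp (smulLin k M s))
    (by
      intro b m n
      show TB.mk k B M N (s • (op b • m)) n = TB.mk k B M N (s • m) (b • n)
      rw [smul_comm s (op b) m, TB.mk_balance])

@[simp] lemma TB.lsmulHom_mk (s : S) (m : M) (n : N) :
    TB.lsmulHom k B M N s (TB.mk k B M N m n) = TB.mk k B M N (s • m) n := rfl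

/-- The left action of a ring `S` (acting on `M` on the left, commuting with the
right `B`-action) on `M ⊗_B N`. -/
noncomputable def TB.moduleLeft : Module S (TB k B M N) where
  smul s x := TB.lsmulHom k B M N s x
  one_smul x := by
    refine TB.ind k B M N (p := fun x => TB.lsmulHom k B M N (1 : S) x = x)
      (by simp) (fun m n => by simp) (fun a b ha hb => ?_) x
    simp only [map_add, ha, hb]
  mul_smul s t x := by
    refine TB.ind k B M N
      (p := fun x => TB.lsmulHom k B M N (s * t) x
        = TB.lsmulHom k B M N s (TB.lsmulHom k B M N t x))
      (by simp) (fun m n => by simp [mul_smul]) (fun a b ha hb => ?_) x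
    simp only [map_add, ha, hb]
  smul_zero s := map_zero _
  smul_add s x y := map_add _ x y
  add_smul s t x := by
    refine TB.ind k B M N
      (p := fun x => TB.lsmulHom k B M N (s + t) x
        = TB.lsmulHom k B M N s x + TB.lsmulHom k B M N t x)
      (by simp) (fun m n => by simp [add_smul, map_add]) (fun a b ha hb => ?_) x
    simp only [map_add, ha, hb]
    abel
  zero_smul x := by
    refine TB.ind k B M N (p := fun x => TB.lsmulHom k B M N (0 : S) x = 0)
      (by simp) (fun m n => by simp) (fun a b ha hb => ?_) x
    simp only [map_add, ha, hb, add_zero]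

end LeftAction

section LeftB

variable [Module B M] [IsScalarTower k B M] [SMulCommClass B Bᵐᵒᵖ M]

noncomputable instance TB.instModuleLeftB : Module B (TB k B M N) :=
  TB.moduleLeft k B M N (S := B)

@[simp] lemma TB.smul_mk (b : B) (m : M) (n : N) :
    b • TB.mk k B M N m n = TB.mk k B M N (b • m) n := rfl

instance TB.instTowerLeftB : IsScalarTower k B (TB k B M N) := by
  constructor
  intro c b x
  refine TB.ind k B M N (p := fun x => (c • b) • x = c • b • x)
    (by simp) (fun m n => ?_) (fun a y ha hy => ?_) x
  · show (c • b) • TB.mk k B M N m n = c • b • TB.mk k B M N m n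
    rw [TB.smul_mk, TB.smul_mk, smul_assoc, map_smul, LinearMap.smul_apply]
  · show (c • b) • (a + y) = c • b • (a + y)
    rw [smul_add, smul_add, smul_add]
    exact congrArg₂ (· + ·) ha hy

end LeftB

section RightB

variable [Module Bᵐᵒᵖ N] [IsScalarTower k Bᵐᵒᵖ N] [SMulCommClass B Bᵐᵒᵖ N]

noncomputable def TB.rsmulHom (b : Bᵐᵒᵖ) : TB k B M N →ₗ[k] TB k B M N :=
  TB.lift k B M N
    ((TB.mk k B M N).compl₂ (smulLin k N b))
    (by
      intro c m n
      show TB.mk k B M N (op c • m) (b • n) = TB.mk k B M N m (b • (c • n))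
      rw [TB.mk_balance, smul_comm c b n])

@[simp] lemma TB.rsmulHom_mk (b : Bᵐᵒᵖ) (m : M) (n : N) :
    TB.rsmulHom k B M N b (TB.mk k B M N m n) = TB.mk k B M N m (b • n) := rfl

noncomputable instance TB.instModuleRightB : Module Bᵐᵒᵖ (TB k B M N) where
  smul b x := TB.rsmulHom k B M N b x
  one_smul x := by
    refine TB.ind k B M N (p := fun x => TB.rsmulHom k B M N (1 : Bᵐᵒᵖ) x = x)
      (by simp) (fun m n => by simp) (fun a b ha hb => ?_) x
    simp only [map_add, ha, hb]
  mul_smul s t x := by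
    refine TB.ind k B M N
      (p := fun x => TB.rsmulHom k B M N (s * t) x
        = TB.rsmulHom k B M N s (TB.rsmulHom k B M N t x))
      (by simp) (fun m n => by simp [mul_smul]) (fun a b ha hb => ?_) x
    simp only [map_add, ha, hb]
  smul_zero s := map_zero _
  smul_add s x y := map_add _ x y
  add_smul s t x := by
    refine TB.ind k B M N
      (p := fun x => TB.rsmulHom k B M N (s + t) x
        = TB.rsmulHom k B M N s x + TB.rsmulHom k B M N t x)
      (by simp) (fun m n => by simp [add_smul, map_add]) (fun a b ha hb => ?_) x
    simp only [map_add, ha, hb]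
    abel
  zero_smul x := by
    refine TB.ind k B M N (p := fun x => TB.rsmulHom k B M N (0 : Bᵐᵒᵖ) x = 0)
      (by simp) (fun m n => by simp) (fun a b ha hb => ?_) x
    simp only [map_add, ha, hb, add_zero]

@[simp] lemma TB.op_smul_mk (b : Bᵐᵒᵖ) (m : M) (n : N) :
    b • TB.mk k B M N m n = TB.mk k B M N m (b • n) := rfl

instance TB.instTowerRightB : IsScalarTower k Bᵐᵒᵖ (TB k B M N) := by
  constructor
  intro c b x
  refine TB.ind k B M N (p := fun x => (c • b) • x = c • b • x)
    (by simp) (fun m n => ?_) (fun a y ha hy => ?_) x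
  · show (c • b) • TB.mk k B M N m n = c • b • TB.mk k B M N m n
    rw [TB.op_smul_mk, TB.op_smul_mk, smul_assoc, map_smul]
  · show (c • b) • (a + y) = c • b • (a + y)
    rw [smul_add, smul_add, smul_add]
    exact congrArg₂ (· + ·) ha hy

end RightB

section Map

variable {M' N' : Type}
  [AddCommGroup M'] [Module k M'] [Module Bᵐᵒᵖ M'] [IsScalarTower k Bᵐᵒᵖ M']
  [AddCommGroup N'] [Module k N'] [Module B N'] [IsScalarTower k B N']

noncomputable def TB.map (f : M →ₗ[k] M') (g : N →ₗ[k] N')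
    (hf : ∀ (b : B) (m : M), f (op b • m) = op b • f m)
    (hg : ∀ (b : B) (n : N), g (b • n) = b • g n) :
    TB k B M N →ₗ[k] TB k B M' N' :=
  TB.lift k B M N ((TB.mk k B M' N').compl₁₂ f g)
    (by intro b m n; simp [LinearMap.compl₁₂_apply, hf, hg, TB.mk_balance])

@[simp] lemma TB.map_mk (f : M →ₗ[k] M') (g : N →ₗ[k] N')
    (hf : ∀ (b : B) (m : M), f (op b • m) = op b • f m)
    (hg : ∀ (b : B) (n : N), g (b • n) = b • g n) (m : M) (n : N) :
    TB.map k B M N f g hf hg (TB.mk k B M N m n) = TB.mk k B M' N' (f m) (g n) := rfl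

end Map


section Assoc

variable (P : Type) [AddCommGroup P] [Module k P] [Module B P] [IsScalarTower k B P]
variable [Module B N] [IsScalarTower k B N]
variable [Module Bᵐᵒᵖ N] [IsScalarTower k Bᵐᵒᵖ N] [SMulCommClass B Bᵐᵒᵖ N]

noncomputable def TB.innerPsi : P →ₗ[k] (TB k B M N →ₗ[k] TB k B M (TB k B N P)) where
  toFun p := TB.lift k B M N
      ((TB.mk k B M (TB k B N P)).compl₂ ((TB.mk k B N P).flip p))
      (by
        intro b m n
        simp only [LinearMap.compl₂_apply, LinearMap.flip_apply]
        rw [TB.mk_balance k B M (TB k B N P) b m, TB.smul_mk])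
  map_add' p q := TB.hom_ext k B M N (by intro m n; simp [map_add])
  map_smul' c p := TB.hom_ext k B M N (by intro m n; simp)

noncomputable def TB.assocMap :
    TB k B (TB k B M N) P →ₗ[k] TB k B M (TB k B N P) :=
  TB.lift k B (TB k B M N) P (TB.innerPsi k B M N P).flip
    (by
      intro b x p
      simp only [LinearMap.flip_apply]
      refine TB.ind k B M N
        (p := fun x => TB.innerPsi k B M N P p (op b • x)
          = TB.innerPsi k B M N P (b • p) x)
        (by simp) (fun m n => ?_) (fun a y ha hy => ?_) x
      · show TB.innerPsi k B M N P p (op b • TB.mk k B M N m n)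
          = TB.innerPsi k B M N P (b • p) (TB.mk k B M N m n)
        rw [TB.op_smul_mk]
        simp only [TB.innerPsi, LinearMap.coe_mk, AddHom.coe_mk, TB.lift_mk,
          LinearMap.compl₂_apply, LinearMap.flip_apply]
        rw [TB.mk_balance]
      · show TB.innerPsi k B M N P p (op b • (a + y))
          = TB.innerPsi k B M N P (b • p) (a + y)
        rw [smul_add, map_add, map_add]
        exact congrArg₂ (· + ·) ha hy)

@[simp] lemma TB.assocMap_mk (m : M) (n : N) (p : P) :
    TB.assocMap k B M N P (TB.mk k B (TB k B M N) P (TB.mk k B M N m n) p)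
      = TB.mk k B M (TB k B N P) m (TB.mk k B N P n p) := rfl

end Assoc

end TBLib
section BoxLib

variable (k : Type) [Field k] (B : Type) [Ring B] [Algebra k B]
variable (W : Type) [AddCommGroup W] [Module k W] [Module B W] [Module Bᵐᵒᵖ W]
  [IsScalarTower k B W] [IsScalarTower k Bᵐᵒᵖ W] [SMulCommClass B Bᵐᵒᵖ W]
variable (X Y Z : Type)
  [AddCommGroup X] [Module k X] [Module B X] [IsScalarTower k B X]
  [AddCommGroup Y] [Module k Y] [Module B Y] [IsScalarTower k B Y]
  [AddCommGroup Z] [Module k Z] [Module B Z] [IsScalarTower k B Z]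

/-- `f : W →ₗ[k] Hom_k(X,Y)` is a morphism of box representations when it is a
`B`-`B`-bimodule map, where `Hom_k(X,Y)` carries the bimodule structure
`(b · f · b') (x) = b • f (b' • x)`. -/
def IsBoxHom (f : W →ₗ[k] X →ₗ[k] Y) : Prop :=
  (∀ (b : B) (w : W) (x : X), f (b • w) x = b • f w x) ∧
  (∀ (b : B) (w : W) (x : X), f (op b • w) x = f w (b • x))

/-- Box morphisms form a `k`-submodule of the space of bilinear maps. -/
def boxHomSub : Submodule k (W →ₗ[k] X →ₗ[k] Y) where
  carrier := {f | IsBoxHom k B W X Y f}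
  add_mem' := fun hf hg => ⟨fun b w x => by
      simp only [LinearMap.add_apply, hf.1 b w x, hg.1 b w x, smul_add],
    fun b w x => by simp only [LinearMap.add_apply, hf.2 b w x, hg.2 b w x]⟩
  zero_mem' := ⟨fun b w x => by simp, fun b w x => by simp⟩
  smul_mem' := fun c f hf => ⟨fun b w x => by
      simp only [LinearMap.smul_apply, hf.1 b w x, smul_comm c b],
    fun b w x => by simp only [LinearMap.smul_apply, hf.2 b w x]⟩

/-- The composite `v₂ ∘ (g ⊗ f)` on `W ⊗_B W`. -/
noncomputable def boxCompAux
    (g : W →ₗ[k] Y →ₗ[k] Z) (f : W →ₗ[k] X →ₗ[k] Y)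
    (hg : ∀ (b : B) (w : W) (y : Y), g (op b • w) y = g w (b • y))
    (hf : ∀ (b : B) (w : W) (x : X), f (b • w) x = b • f w x) :
    TB k B W W →ₗ[k] (X →ₗ[k] Z) :=
  TB.lift k B W W ((LinearMap.llcomp k X Y Z).compl₁₂ g f) (by
    intro b w1 w2
    ext x
    simp only [LinearMap.compl₁₂_apply, LinearMap.llcomp_apply, hg, hf])

@[simp] lemma boxCompAux_mk (g : W →ₗ[k] Y →ₗ[k] Z) (f : W →ₗ[k] X →ₗ[k] Y)
    (hg : ∀ (b : B) (w : W) (y : Y), g (op b • w) y = g w (b • y))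
    (hf : ∀ (b : B) (w : W) (x : X), f (b • w) x = b • f w x) (w1 w2 : W) (x : X) :
    boxCompAux k B W X Y Z g f hg hf (TB.mk k B W W w1 w2) x = g w1 (f w2 x) := rfl

/-- Composition of morphisms of box representations, `v₂ ∘ (g ⊗ f) ∘ μ`. -/
noncomputable def boxComp (μ : W →ₗ[k] TB k B W W)
    (g : W →ₗ[k] Y →ₗ[k] Z) (f : W →ₗ[k] X →ₗ[k] Y)
    (hg : ∀ (b : B) (w : W) (y : Y), g (op b • w) y = g w (b • y))
    (hf : ∀ (b : B) (w : W) (x : X), f (b • w) x = b • f w x) :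
    W →ₗ[k] X →ₗ[k] Z :=
  (boxCompAux k B W X Y Z g f hg hf).comp μ

lemma boxComp_apply (μ : W →ₗ[k] TB k B W W)
    (g : W →ₗ[k] Y →ₗ[k] Z) (f : W →ₗ[k] X →ₗ[k] Y) (hg hf) (w : W) :
    boxComp k B W X Y Z μ g f hg hf w = boxCompAux k B W X Y Z g f hg hf (μ w) := rfl

theorem boxComp_isBoxHom (μ : W →ₗ[k] TB k B W W)
    (hμl : ∀ (b : B) (w : W), μ (b • w) = b • μ w)
    (hμr : ∀ (b : B) (w : W), μ (op b • w) = op b • μ w)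
    {f : W →ₗ[k] X →ₗ[k] Y} {g : W →ₗ[k] Y →ₗ[k] Z}
    (hf : IsBoxHom k B W X Y f) (hg : IsBoxHom k B W Y Z g) :
    IsBoxHom k B W X Z (boxComp k B W X Y Z μ g f hg.2 hf.1) := by
  constructor
  · intro b w x
    have key : ∀ t, boxCompAux k B W X Y Z g f hg.2 hf.1 (b • t) x
        = b • boxCompAux k B W X Y Z g f hg.2 hf.1 t x := by
      refine TB.ind k B W W
        (p := fun t => boxCompAux k B W X Y Z g f hg.2 hf.1 (b • t) x
          = b • boxCompAux k B W X Y Z g f hg.2 hf.1 t x) (by simp) ?_ ?_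
      · intro w1 w2
        rw [TB.smul_mk, boxCompAux_mk, boxCompAux_mk]
        exact hg.1 b w1 (f w2 x)
      · intro a y ha hy
        simp only [smul_add, map_add, LinearMap.add_apply, ha, hy]
    rw [boxComp_apply, boxComp_apply, hμl, key]
  · intro b w x
    have key : ∀ t, boxCompAux k B W X Y Z g f hg.2 hf.1 (op b • t) x
        = boxCompAux k B W X Y Z g f hg.2 hf.1 t (b • x) := by
      refine TB.ind k B W W
        (p := fun t => boxCompAux k B W X Y Z g f hg.2 hf.1 (op b • t) x
          = boxCompAux k B W X Y Z g f hg.2 hf.1 t (b • x)) (by simp) ?_ ?_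
      · intro w1 w2
        rw [TB.op_smul_mk, boxCompAux_mk, boxCompAux_mk]
        exact congrArg (g w1) (hf.2 b w2 x)
      · intro a y ha hy
        simp only [smul_add, map_add, LinearMap.add_apply, ha, hy]
    rw [boxComp_apply, boxComp_apply, hμr, key]

/-- The action `B →ₗ[k] Hom_k(X,X)`. -/
noncomputable def actHom : B →ₗ[k] X →ₗ[k] X where
  toFun b := smulLin k X b
  map_add' a b := by ext x; simp [add_smul]
  map_smul' c b := by ext x; simp [smul_assoc]

@[simp] lemma actHom_apply (b : B) (x : X) : actHom k B X b x = b • x := rfl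

/-- The identity morphism of a box representation: `ε` followed by the action. -/
noncomputable def boxId (ε : W →ₗ[k] B) : W →ₗ[k] X →ₗ[k] X :=
  (actHom k B X).comp ε

@[simp] lemma boxId_apply (ε : W →ₗ[k] B) (w : W) (x : X) :
    boxId k B W X ε w x = ε w • x := rfl

theorem boxId_isBoxHom (ε : W →ₗ[k] B)
    (hεl : ∀ (b : B) (w : W), ε (b • w) = b * ε w)
    (hεr : ∀ (b : B) (w : W), ε (op b • w) = ε w * b) :
    IsBoxHom k B W X X (boxId k B W X ε) := by
  constructor
  · intro b w x
    rw [boxId_apply, boxId_apply, hεl, mul_smul]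
  · intro b w x
    rw [boxId_apply, boxId_apply, hεr, mul_smul]

/-- The map `W ⊗_B W → W`, `w₁ ⊗ w₂ ↦ ε(w₁) • w₂`, used in the left counit axiom. -/
noncomputable def counitLeftMap (ε : W →ₗ[k] B)
    (hεr : ∀ (b : B) (w : W), ε (op b • w) = ε w * b) : TB k B W W →ₗ[k] W :=
  TB.lift k B W W ((actHom k B W).comp ε) (by
    intro b w1 w2
    show ε (op b • w1) • w2 = ε w1 • (b • w2)
    rw [hεr, mul_smul])

@[simp] lemma counitLeftMap_mk (ε : W →ₗ[k] B) (hεr) (w1 w2 : W) :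
    counitLeftMap k B W ε hεr (TB.mk k B W W w1 w2) = ε w1 • w2 := rfl

/-- The map `W ⊗_B W → W`, `w₁ ⊗ w₂ ↦ w₁ • ε(w₂)`, used in the right counit axiom. -/
noncomputable def counitRightMap (ε : W →ₗ[k] B)
    (hεl : ∀ (b : B) (w : W), ε (b • w) = b * ε w) : TB k B W W →ₗ[k] W :=
  TB.lift k B W W
    (LinearMap.mk₂ k (fun w1 w2 => op (ε w2) • w1)
      (fun m1 m2 n => smul_add _ m1 m2)
      (fun c m n => smul_comm _ c m)
      (fun m n1 n2 => by
        show op (ε (n1 + n2)) • m = op (ε n1) • m + op (ε n2) • m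
        rw [map_add, MulOpposite.op_add, add_smul])
      (fun c m n => by
        show op (ε (c • n)) • m = c • (op (ε n) • m)
        rw [map_smul, MulOpposite.op_smul, smul_assoc]))
    (by
      intro b w1 w2
      show op (ε w2) • (op b • w1) = op (ε (b • w2)) • w1
      rw [hεl, smul_smul, MulOpposite.op_mul])

@[simp] lemma counitRightMap_mk (ε : W →ₗ[k] B) (hεl) (w1 w2 : W) :
    counitRightMap k B W ε hεl (TB.mk k B W W w1 w2) = op (ε w2) • w1 := rfl

end BoxLib

section DGBoxLib

set_option maxHeartbeats 1600000

variable (k B : Type) [Field k] [Ring B] [Algebra k B]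
variable (W : Type) [AddCommGroup W] [Module k W] [Module B W] [Module Bᵐᵒᵖ W]
  [IsScalarTower k B W] [IsScalarTower k Bᵐᵒᵖ W] [SMulCommClass B Bᵐᵒᵖ W]

/-- The sub-bimodule of the kernel spanned by the dashed generators. -/
def dashedSub {m : ℕ} (φ : Fin m → W) : Submodule k W :=
  Submodule.span k {x | ∃ (a b : B) (g : Fin m), x = a • (op b • φ g)}

/-- The subspace `Ū ⊗ Ū ⊆ W ⊗_B W` spanned by tensors of dashed elements. -/
def dashedTensor {m : ℕ} (φ : Fin m → W) : Submodule k (TB k B W W) :=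
  Submodule.span k {t | ∃ x ∈ dashedSub k B W φ, ∃ y ∈ dashedSub k B W φ,
    t = TB.mk k B W W x y}

/-- A box `(B, W, μ, ε)` obtained from the differential graded tensor algebra
construction over a directed quiver: `B` is basic and directed with complete
orthogonal idempotents `e i`, the counit kernel is generated by dashed
generators `φ g` going strictly upwards, the `ω i` are grouplike, and the
comultiplication is triangular on the dashed generators. -/
structure DirectedDGBox (n m : ℕ) where
  μ : W →ₗ[k] TB k B W W
  μ_left : ∀ (b : B) (w : W), μ (b • w) = b • μ w
  μ_right : ∀ (b : B) (w : W), μ (op b • w) = op b • μ w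
  coassoc : ∀ w : W, TB.assocMap k B W W W
      ((TB.map k B W W μ LinearMap.id μ_right (fun _ _ => rfl)) (μ w))
    = (TB.map k B W W LinearMap.id μ (fun _ _ => rfl) μ_left) (μ w)
  ε : W →ₗ[k] B
  ε_left : ∀ (b : B) (w : W), ε (b • w) = b * ε w
  ε_right : ∀ (b : B) (w : W), ε (op b • w) = ε w * b
  counit_l : ∀ w : W, counitLeftMap k B W ε ε_right (μ w) = w
  counit_r : ∀ w : W, counitRightMap k B W ε ε_left (μ w) = w
  e : Fin n → B
  e_orth : ∀ i j, e i * e j = if i = j then e i else 0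
  e_sum : ∑ i, e i = 1
  B_directed : ∀ (b : B) (i j : Fin n), i ≠ j → e j * b * e i ≠ 0 → i < j
  B_local : ∀ (b : B) (i : Fin n), ∃ c : k, e i * b * e i = c • e i
  ω : Fin n → W
  ω_supp_l : ∀ i, e i • ω i = ω i
  ω_supp_r : ∀ i, op (e i) • ω i = ω i
  ω_counit : ∀ i, ε (ω i) = e i
  ω_grouplike : ∀ i, μ (ω i) = TB.mk k B W W (ω i) (ω i)
  φ : Fin m → W
  src : Fin m → Fin n
  tgt : Fin m → Fin n
  φ_dir : ∀ g, src g < tgt g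
  φ_supp_l : ∀ g, e (tgt g) • φ g = φ g
  φ_supp_r : ∀ g, op (e (src g)) • φ g = φ g
  φ_ker : ∀ g, ε (φ g) = 0
  ker_span : ∀ w : W, ε w = 0 → w ∈ dashedSub k B W φ
  φ_comul : ∀ g, μ (φ g)
      - (TB.mk k B W W (ω (tgt g)) (φ g) + TB.mk k B W W (φ g) (ω (src g)))
    ∈ dashedTensor k B W φ

/-- A finite dimensional representation of the underlying algebra `B`. -/
structure BRep where
  carrier : Type
  [iAG : AddCommGroup carrier]
  [iMk : Module k carrier]
  [iMB : Module B carrier]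
  [iT : IsScalarTower k B carrier]
  [iFD : FiniteDimensional k carrier]

attribute [instance] BRep.iAG BRep.iMk BRep.iMB BRep.iT BRep.iFD

/-- Morphisms of box representations. -/
abbrev BoxHomT (X Y : BRep k B) : Type :=
  ↥(boxHomSub k B W X.carrier Y.carrier)

lemma boxHomT_prop {X Y : BRep k B} (f : BoxHomT k B W X Y) :
    IsBoxHom k B W X.carrier Y.carrier f.1 := f.2

variable {n m : ℕ}

/-- Composition in the category of box representations. -/
noncomputable def bComp (D : DirectedDGBox k B W n m) {X Y Z : BRep k B}
    (g : BoxHomT k B W Y Z) (f : BoxHomT k B W X Y) : BoxHomT k B W X Z :=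
  ⟨boxComp k B W X.carrier Y.carrier Z.carrier D.μ g.1 f.1
      (boxHomT_prop k B W g).2 (boxHomT_prop k B W f).1,
    boxComp_isBoxHom k B W X.carrier Y.carrier Z.carrier D.μ D.μ_left D.μ_right
      (boxHomT_prop k B W f) (boxHomT_prop k B W g)⟩

/-- The identity morphism of a box representation. -/
noncomputable def bId (D : DirectedDGBox k B W n m) (X : BRep k B) :
    BoxHomT k B W X X :=
  ⟨boxId k B W X.carrier D.ε,
    boxId_isBoxHom k B W X.carrier D.ε D.ε_left D.ε_right⟩

/-- The vertex component `X(i) = e_i • X` of a representation. -/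
noncomputable def vtx (D : DirectedDGBox k B W n m) (X : BRep k B) (i : Fin n) :
    Submodule k X.carrier :=
  LinearMap.range (actHom k B X.carrier (D.e i))

/-- The component `f_i : X(i) → Y(i)` of a morphism of box representations,
given by evaluation at the grouplike generator `ω i`. -/
noncomputable def compMap (D : DirectedDGBox k B W n m) {X Y : BRep k B}
    (f : BoxHomT k B W X Y) (i : Fin n) :
    ↥(vtx k B W D X i) →ₗ[k] ↥(vtx k B W D Y i) :=
  LinearMap.codRestrict (vtx k B W D Y i)
    ((f.1 (D.ω i)).domRestrict (vtx k B W D X i))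
    (by
      intro c
      refine ⟨f.1 (D.ω i) c.1, ?_⟩
      rw [actHom_apply, ← (boxHomT_prop k B W f).1 (D.e i) (D.ω i) c.1,
        D.ω_supp_l i]
      rfl)

/-- An exact pair of morphisms of box representations: `g ∘ f = 0` and the
vertexwise sequences `0 → X(i) → Y(i) → Z(i) → 0` are exact. -/
def IsExactPair (D : DirectedDGBox k B W n m) {X Y Z : BRep k B}
    (f : BoxHomT k B W X Y) (g : BoxHomT k B W Y Z) : Prop :=
  bComp k B W D g f = 0 ∧
  ∀ i, Function.Injective (compMap k B W D f i) ∧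
    Function.Exact (compMap k B W D f i) (compMap k B W D g i) ∧
    Function.Surjective (compMap k B W D g i)

/-- Deflations: morphisms appearing as the epi part of an exact pair. -/
def IsDeflation (D : DirectedDGBox k B W n m) {Y Z : BRep k B}
    (g : BoxHomT k B W Y Z) : Prop :=
  ∃ (X : BRep k B) (f : BoxHomT k B W X Y), IsExactPair k B W D f g

/-- Inflations: morphisms appearing as the mono part of an exact pair. -/
def IsInflation (D : DirectedDGBox k B W n m) {X Y : BRep k B}
    (f : BoxHomT k B W X Y) : Prop :=
  ∃ (Z : BRep k B) (g : BoxHomT k B W Y Z), IsExactPair k B W D f g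

end DGBoxLib



open TensorProduct MulOpposite

namespace S12

set_option maxHeartbeats 1600000

variable (k B : Type) [Field k] [Ring B] [Algebra k B]
variable (W : Type) [AddCommGroup W] [Module k W] [Module B W] [Module Bᵐᵒᵖ W]
  [IsScalarTower k B W] [IsScalarTower k Bᵐᵒᵖ W] [SMulCommClass B Bᵐᵒᵖ W]
variable {n m : ℕ} (D : DirectedDGBox k B W n m)

/-! ### Group 0 : basic module facts -/

lemma sum_e_smul (X : BRep k B) (x : X.carrier) : ∑ i, D.e i • x = x := by
  rw [← Finset.sum_smul, D.e_sum, one_smul]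

lemma e_directed_zero {i j : Fin n} (b : B) (h : (i : ℕ) < (j : ℕ)) :
    D.e i * b * D.e j = 0 := by
  by_contra hne
  have hij : i ≠ j := by intro hh; rw [hh] at h; omega
  have := D.B_directed b j i (fun hh => hij hh.symm) hne
  have : (j : ℕ) < (i : ℕ) := this
  omega

/-- The filtration `X_L = span { e_i • x : i ≥ L }`. -/
def Vfilt (X : BRep k B) (L : ℕ) : Submodule k X.carrier :=
  Submodule.span k {y | ∃ i : Fin n, L ≤ (i : ℕ) ∧ ∃ x, y = D.e i • x}

lemma mem_Vfilt (X : BRep k B) {L : ℕ} (i : Fin n) (hi : L ≤ (i : ℕ)) (x : X.carrier) :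
    D.e i • x ∈ Vfilt k B W D X L :=
  Submodule.subset_span ⟨i, hi, x, rfl⟩

lemma Vfilt_antitone (X : BRep k B) {L L' : ℕ} (h : L ≤ L') :
    Vfilt k B W D X L' ≤ Vfilt k B W D X L := by
  apply Submodule.span_le.mpr
  rintro y ⟨i, hi, x, rfl⟩
  exact mem_Vfilt k B W D X i (le_trans h hi) x

lemma eq_zero_of_Vfilt_zero (X : BRep k B) (h : Vfilt k B W D X 0 = ⊥) (x : X.carrier) :
    x = 0 := by
  have hx : x ∈ Vfilt k B W D X 0 := by
    rw [← sum_e_smul k B W D X x]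
    exact Submodule.sum_mem _ fun i _ => mem_Vfilt k B W D X i (Nat.zero_le _) x
  rw [h] at hx
  simpa using hx


lemma smul_mem_Vfilt (X : BRep k B) {L : ℕ} (b : B) {y : X.carrier}
    (hy : y ∈ Vfilt k B W D X L) : b • y ∈ Vfilt k B W D X L := by
  induction hy using Submodule.span_induction with
  | mem y hy =>
    obtain ⟨i, hi, x, rfl⟩ := hy
    have : b • (D.e i • x) = ∑ j, D.e j • ((b * D.e i) • x) := by
      rw [← sum_e_smul k B W D X (b • (D.e i • x))]
      congr 1; funext j
      simp [smul_smul, mul_assoc]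
    rw [this]
    apply Submodule.sum_mem
    intro j _
    by_cases hj : L ≤ (j : ℕ)
    · exact mem_Vfilt k B W D X j hj _
    · -- j < L ≤ i so e_j * (b * e_i) = 0
      have hji : (j : ℕ) < (i : ℕ) := by omega
      have h0 : D.e j * (b * D.e i) = 0 := by
        have := e_directed_zero k B W D (i := j) (j := i) b hji
        rw [← mul_assoc]; exact this
      rw [smul_smul, h0, zero_smul]
      exact Submodule.zero_mem _
  | zero => simpa using Submodule.zero_mem _
  | add a c _ _ ha hc => rw [smul_add]; exact Submodule.add_mem _ ha hc
  | smul c y _ hy => rw [smul_comm]; exact Submodule.smul_mem _ c hy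

/-- On a "top level" `t` (everything above `t` vanishes), the action of `b` on an
`e t`-fixed vector is via `e t * b * e t`. -/
lemma smul_top_fixed (X : BRep k B) (t : Fin n)
    (htop : Vfilt k B W D X ((t : ℕ) + 1) = ⊥) (c : B) (x : X.carrier)
    (hx : D.e t • x = x) : c • x = (D.e t * c * D.e t) • x := by
  have h1 : c • x = ∑ j, (D.e j * c * D.e t) • x := by
    conv_lhs => rw [← hx, ← sum_e_smul k B W D X (c • (D.e t • x))]
    congr 1; funext j
    simp [smul_smul, mul_assoc]
  rw [h1]
  rw [Finset.sum_eq_single t]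
  · intro j _ hj
    rcases lt_or_gt_of_ne (fun hh : (j:ℕ) = (t:ℕ) => hj (Fin.ext hh)) with h | h
    · rw [e_directed_zero k B W D c h, zero_smul]
    · have : (D.e j * c * D.e t) • x ∈ Vfilt k B W D X ((t : ℕ) + 1) := by
        have : (D.e j * c * D.e t) • x = D.e j • ((c * D.e t) • x) := by
          rw [smul_smul, mul_assoc]
        rw [this]
        exact mem_Vfilt k B W D X j (by omega) _
      rw [htop] at this
      simpa using this
  · intro h; exact absurd (Finset.mem_univ t) h

lemma e_smul_eq_zero_of_lt (X : BRep k B) {i : Fin n} {L : ℕ} (hiL : (i : ℕ) < L)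
    {u : X.carrier} (hu : u ∈ Vfilt k B W D X L) : D.e i • u = 0 := by
  induction hu using Submodule.span_induction with
  | mem y hy =>
    obtain ⟨r, hr, x, rfl⟩ := hy
    have h0 : D.e i * D.e r = 0 := by
      rw [D.e_orth i r, if_neg]
      intro hh; subst hh; omega
    rw [smul_smul, h0, zero_smul]
  | zero => simp
  | add a c _ _ ha hc => rw [smul_add, ha, hc, add_zero]
  | smul c y _ hy => rw [smul_comm, hy, smul_zero]

/-! ### Group 1 : structure of `W` -/

/-- The canonical `k`-linear section `σ(b) = ∑ b • ω i` of `ε`. -/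
noncomputable def sigmaB : B →ₗ[k] W where
  toFun b := ∑ i, b • D.ω i
  map_add' a b := by
    simp [add_smul, Finset.sum_add_distrib]
  map_smul' c b := by
    simp [smul_assoc, Finset.smul_sum]

lemma eps_sigma (b : B) : D.ε (sigmaB k B W D b) = b := by
  unfold sigmaB
  simp only [LinearMap.coe_mk, AddHom.coe_mk, map_sum]
  have : ∀ i, D.ε (b • D.ω i) = b * D.e i := by
    intro i; rw [D.ε_left, D.ω_counit]
  rw [Finset.sum_congr rfl (fun i _ => this i), ← Finset.mul_sum, D.e_sum, mul_one]

lemma ker_decomp (w : W) (j : Fin n) :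
    op (D.e j) • w - sigmaB k B W D (D.ε w * D.e j) ∈ dashedSub k B W D.φ := by
  apply D.ker_span
  rw [map_sub, D.ε_right, eps_sigma, sub_self]

/-! ### Group 1b : morphism evaluation lemmas -/

section MorLemmas

variable {X Y : BRep k B} (f : BoxHomT k B W X Y)

lemma hom_left (b : B) (w : W) (x : X.carrier) :
    f.1 (b • w) x = b • f.1 w x := (boxHomT_prop k B W f).1 b w x

lemma hom_right (b : B) (w : W) (x : X.carrier) :
    f.1 (op b • w) x = f.1 w (b • x) := (boxHomT_prop k B W f).2 b w x

lemma omega_apply_supp (i : Fin n) (x : X.carrier) :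
    D.e i • f.1 (D.ω i) x = f.1 (D.ω i) x := by
  conv_rhs => rw [← D.ω_supp_l i]
  rw [hom_left]

lemma omega_apply_fix (i : Fin n) (x : X.carrier) :
    f.1 (D.ω i) x = f.1 (D.ω i) (D.e i • x) := by
  conv_lhs => rw [← D.ω_supp_r i, hom_right]

lemma sigma_apply (c : B) (x : X.carrier) (j : Fin n) (hx : D.e j • x = x) :
    f.1 (sigmaB k B W D c) x = c • f.1 (D.ω j) x := by
  unfold sigmaB
  simp only [LinearMap.coe_mk, AddHom.coe_mk]
  rw [map_sum, LinearMap.sum_apply, Finset.sum_eq_single j]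
  · rw [hom_left]
  · intro i _ hij
    rw [hom_left, omega_apply_fix k B W D f i x, ← hx, smul_smul, D.e_orth,
      if_neg hij, zero_smul, map_zero, smul_zero]
  · intro h; exact absurd (Finset.mem_univ j) h

/-- Values of `f` on dashed elements, applied to `e j`-fixed vectors, land in
levels `> j`. -/
lemma dashed_apply_mem {d : W} (hd : d ∈ dashedSub k B W D.φ) (j : Fin n)
    (x : X.carrier) (hx : D.e j • x = x) :
    f.1 d x ∈ Vfilt k B W D Y ((j : ℕ) + 1) := by
  induction hd using Submodule.span_induction with
  | mem y hy =>
    obtain ⟨a, b, g, rfl⟩ := hy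
    rw [hom_left, hom_right]
    have hz : f.1 (D.φ g) (b • x) = f.1 (D.φ g) ((D.e (D.src g) * b * D.e j) • x) := by
      conv_lhs => rw [← D.φ_supp_r g, hom_right, ← hx]
      rw [smul_smul, smul_smul, mul_assoc]
    by_cases h0 : D.e (D.src g) * b * D.e j = 0
    · rw [hz, h0, zero_smul, map_zero, smul_zero]
      exact Submodule.zero_mem _
    · have hsj : (j : ℕ) ≤ (D.src g : ℕ) := by
        by_contra hc
        exact h0 (e_directed_zero k B W D b (by omega))
      have htg : (j : ℕ) + 1 ≤ (D.tgt g : ℕ) := by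
        have := D.φ_dir g
        omega
      have hval : f.1 (D.φ g) ((D.e (D.src g) * b * D.e j) • x)
          = D.e (D.tgt g) • f.1 (D.φ g) ((D.e (D.src g) * b * D.e j) • x) := by
        conv_lhs => rw [← D.φ_supp_l g, hom_left]
      rw [hz, hval]
      exact smul_mem_Vfilt k B W D Y a (mem_Vfilt k B W D Y _ htg _)
  | zero => simp only [map_zero, LinearMap.zero_apply]; exact Submodule.zero_mem _
  | add a c _ _ ha hc =>
    rw [map_add, LinearMap.add_apply]; exact Submodule.add_mem _ ha hc
  | smul c y _ hy =>
    rw [map_smul, LinearMap.smul_apply]; exact Submodule.smul_mem _ c hy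

/-- Main evaluation decomposition: on an `e j`-fixed vector, `f w` acts by
`(ε w * e j) • f (ω j)` up to higher levels. -/
lemma apply_fixed_decomp (j : Fin n) (w : W) (x : X.carrier) (hx : D.e j • x = x) :
    f.1 w x - (D.ε w * D.e j) • f.1 (D.ω j) x ∈ Vfilt k B W D Y ((j : ℕ) + 1) := by
  have h1 : f.1 w x = f.1 (op (D.e j) • w) x := by
    rw [hom_right, hx]
  have h2 : f.1 (op (D.e j) • w) x
      = f.1 (sigmaB k B W D (D.ε w * D.e j)) x
        + f.1 (op (D.e j) • w - sigmaB k B W D (D.ε w * D.e j)) x := by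
    rw [← LinearMap.add_apply, ← map_add, add_sub_cancel]
  rw [h1, h2, sigma_apply k B W D f _ x j hx, add_sub_cancel_left]
  exact dashed_apply_mem k B W D f (ker_decomp k B W D w j) j x hx

/-- On a top level `t`, components commute with the `B`-action. -/
lemma component_commute (t : Fin n) (htopY : Vfilt k B W D Y ((t : ℕ) + 1) = ⊥)
    (c : B) (x : X.carrier) (hx : D.e t • x = x) :
    f.1 (D.ω t) (c • x) = c • f.1 (D.ω t) x := by
  have h1 : f.1 (D.ω t) (c • x) = f.1 (op c • D.ω t) x := (hom_right k B W f c _ x).symm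
  have h2 := apply_fixed_decomp k B W D f t (op c • D.ω t) x hx
  rw [htopY] at h2
  have h3 : f.1 (op c • D.ω t) x = (D.ε (op c • D.ω t) * D.e t) • f.1 (D.ω t) x := by
    have h4 : (f.1 (op c • D.ω t)) x - (D.ε (op c • D.ω t) * D.e t) • (f.1 (D.ω t)) x = 0 :=
      (Submodule.mem_bot k).mp h2
    exact sub_eq_zero.mp h4
  rw [h1, h3, D.ε_right, D.ω_counit]
  rw [smul_top_fixed k B W D Y t htopY c _ (omega_apply_supp k B W D f t x)]

end MorLemmas

/-! ### Group 2 : the functor `M(X) = W ⊗_B X` and the hat of a morphism -/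

section HatMachinery

variable {X Y Z : BRep k B}

/-- Auxiliary: `ξ_f : (W ⊗_B W) → (X → W ⊗_B Y)`, `w₁ ⊗ w₂ ↦ (x ↦ w₁ ⊗ f(w₂)x)`. -/
noncomputable def xiMap (f : BoxHomT k B W X Y) :
    TB k B W W →ₗ[k] X.carrier →ₗ[k] TB k B W Y.carrier :=
  TB.lift k B W W
    (LinearMap.mk₂ k
      (fun w₁ w₂ => (TB.mk k B W Y.carrier w₁).comp (f.1 w₂))
      (fun a a' w₂ => by ext x; simp [map_add]
      )
      (fun c a w₂ => by ext x; simp)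
      (fun a b b' => by ext x; simp [map_add])
      (fun c a b => by ext x; simp))
    (by
      intro b w₁ w₂
      ext x
      simp only [LinearMap.mk₂_apply, LinearMap.comp_apply]
      rw [TB.mk_balance, hom_left])

lemma xiMap_mk (f : BoxHomT k B W X Y) (w₁ w₂ : W) (x : X.carrier) :
    xiMap k B W f (TB.mk k B W W w₁ w₂) x
      = TB.mk k B W Y.carrier w₁ (f.1 w₂ x) := rfl

lemma xiMap_op (f : BoxHomT k B W X Y) (b : B) (T : TB k B W W) (x : X.carrier) :
    xiMap k B W f (op b • T) x = xiMap k B W f T (b • x) := by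
  refine TB.ind k B W W
    (p := fun T => xiMap k B W f (op b • T) x = xiMap k B W f T (b • x))
    (by simp) ?_ ?_ T
  · intro w₁ w₂
    rw [TB.op_smul_mk, xiMap_mk, xiMap_mk, hom_right]
  · intro a c ha hc
    rw [smul_add, map_add, map_add]
    simp only [LinearMap.add_apply, ha, hc]

lemma xiMap_smul (f : BoxHomT k B W X Y) (b : B) (T : TB k B W W) (x : X.carrier) :
    xiMap k B W f (b • T) x = b • xiMap k B W f T x := by
  refine TB.ind k B W W
    (p := fun T => xiMap k B W f (b • T) x = b • xiMap k B W f T x)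
    (by simp) ?_ ?_ T
  · intro w₁ w₂
    rw [TB.smul_mk, xiMap_mk, xiMap_mk, TB.smul_mk]
  · intro a c ha hc
    rw [smul_add, map_add, map_add]
    simp only [LinearMap.add_apply, ha, hc, smul_add]

/-- The induced map `hat f : W ⊗_B X → W ⊗_B Y`. -/
noncomputable def hatf (f : BoxHomT k B W X Y) :
    TB k B W X.carrier →ₗ[k] TB k B W Y.carrier :=
  TB.lift k B W X.carrier ((xiMap k B W f).comp D.μ)
    (by
      intro b w x
      simp only [LinearMap.comp_apply]
      rw [D.μ_right, xiMap_op])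

lemma hatf_mk (f : BoxHomT k B W X Y) (w : W) (x : X.carrier) :
    hatf k B W D f (TB.mk k B W X.carrier w x) = xiMap k B W f (D.μ w) x := rfl

lemma hatf_bsmul (f : BoxHomT k B W X Y) (b : B) (u : TB k B W X.carrier) :
    hatf k B W D f (b • u) = b • hatf k B W D f u := by
  refine TB.ind k B W X.carrier
    (p := fun u => hatf k B W D f (b • u) = b • hatf k B W D f u)
    (by simp) ?_ ?_ u
  · intro w x
    rw [TB.smul_mk, hatf_mk, hatf_mk, D.μ_left, xiMap_smul]
  · intro a c ha hc
    rw [smul_add, map_add, map_add, smul_add, ha, hc]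

/-- The counit `c_X : W ⊗_B X → X`. -/
noncomputable def cMap (X : BRep k B) : TB k B W X.carrier →ₗ[k] X.carrier :=
  TB.lift k B W X.carrier ((actHom k B X.carrier).comp D.ε)
    (by
      intro b w x
      simp only [LinearMap.comp_apply, actHom_apply]
      rw [D.ε_right, mul_smul])

lemma cMap_mk (X : BRep k B) (w : W) (x : X.carrier) :
    cMap k B W D X (TB.mk k B W X.carrier w x) = D.ε w • x := rfl

lemma cMap_bsmul (X : BRep k B) (b : B) (u : TB k B W X.carrier) :
    cMap k B W D X (b • u) = b • cMap k B W D X u := by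
  refine TB.ind k B W X.carrier
    (p := fun u => cMap k B W D X (b • u) = b • cMap k B W D X u)
    (by simp) ?_ ?_ u
  · intro w x
    rw [TB.smul_mk, cMap_mk, cMap_mk, D.ε_left, mul_smul]
  · intro a c ha hc
    rw [smul_add, map_add, map_add, smul_add, ha, hc]

/-- The adjoint form `f♯ : W ⊗_B X → Y` of a morphism. -/
noncomputable def sharp (f : BoxHomT k B W X Y) :
    TB k B W X.carrier →ₗ[k] Y.carrier :=
  TB.lift k B W X.carrier f.1 (fun b w x => hom_right k B W f b w x)

lemma sharp_mk (f : BoxHomT k B W X Y) (w : W) (x : X.carrier) :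
    sharp k B W f (TB.mk k B W X.carrier w x) = f.1 w x := rfl

lemma eq_of_sharp_eq {f g : BoxHomT k B W X Y}
    (h : sharp k B W f = sharp k B W g) : f = g := by
  apply Subtype.ext
  ext w x
  have := LinearMap.congr_fun h (TB.mk k B W X.carrier w x)
  rwa [sharp_mk, sharp_mk] at this

lemma cMap_xiMap (f : BoxHomT k B W X Y) (T : TB k B W W) (x : X.carrier) :
    cMap k B W D Y (xiMap k B W f T x)
      = f.1 (counitLeftMap k B W D.ε D.ε_right T) x := by
  refine TB.ind k B W W
    (p := fun T => cMap k B W D Y (xiMap k B W f T x)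
      = f.1 (counitLeftMap k B W D.ε D.ε_right T) x)
    (by simp) ?_ ?_ T
  · intro w₁ w₂
    rw [xiMap_mk, cMap_mk, counitLeftMap_mk, hom_left]
  · intro a c ha hc
    rw [map_add, map_add]
    simp only [LinearMap.add_apply, map_add, ha, hc]

/-- `c_Y ∘ hat f = f♯`. -/
lemma cMap_hatf (f : BoxHomT k B W X Y) :
    (cMap k B W D Y).comp (hatf k B W D f) = sharp k B W f := by
  apply TB.hom_ext
  intro w x
  simp only [LinearMap.comp_apply]
  rw [hatf_mk, sharp_mk, cMap_xiMap, D.counit_l]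

lemma xiMap_bId (T : TB k B W W) (x : X.carrier) :
    xiMap k B W (bId k B W D X) T x
      = TB.mk k B W X.carrier (counitRightMap k B W D.ε D.ε_left T) x := by
  refine TB.ind k B W W
    (p := fun T => xiMap k B W (bId k B W D X) T x
      = TB.mk k B W X.carrier (counitRightMap k B W D.ε D.ε_left T) x)
    (by simp) ?_ ?_ T
  · intro w₁ w₂
    rw [xiMap_mk, counitRightMap_mk]
    show TB.mk k B W X.carrier w₁ (boxId k B W X.carrier D.ε w₂ x) = _
    rw [boxId_apply, ← TB.mk_balance]
  · intro a c ha hc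
    rw [map_add, map_add]
    simp only [LinearMap.add_apply, map_add, ha, hc]

/-- `hat id = id`. -/
lemma hatf_id : hatf k B W D (bId k B W D X) = LinearMap.id := by
  apply TB.hom_ext
  intro w x
  simp only [LinearMap.id_apply]
  rw [hatf_mk, xiMap_bId, D.counit_r]

/-- The triple evaluation map used for coassociativity arguments. -/
noncomputable def Xi3 (g : BoxHomT k B W Y Z) (f : BoxHomT k B W X Y) :
    TB k B W (TB k B W W) →ₗ[k] X.carrier →ₗ[k] TB k B W Z.carrier :=
  TB.lift k B W (TB k B W W)
    (LinearMap.mk₂ k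
      (fun a T => (TB.mk k B W Z.carrier a).comp
        (boxCompAux k B W X.carrier Y.carrier Z.carrier g.1 f.1
          (boxHomT_prop k B W g).2 (boxHomT_prop k B W f).1 T))
      (fun a a' T => by ext x; simp [map_add])
      (fun c a T => by ext x; simp)
      (fun a T T' => by ext x; simp [map_add])
      (fun c a T => by ext x; simp))
    (by
      intro b a T
      ext x
      simp only [LinearMap.mk₂_apply, LinearMap.comp_apply]
      rw [TB.mk_balance]
      congr 1
      -- b • (bca T x) = bca (b • T) x
      refine TB.ind k B W W
        (p := fun T => b • boxCompAux k B W X.carrier Y.carrier Z.carrier g.1 f.1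
            (boxHomT_prop k B W g).2 (boxHomT_prop k B W f).1 T x
          = boxCompAux k B W X.carrier Y.carrier Z.carrier g.1 f.1
            (boxHomT_prop k B W g).2 (boxHomT_prop k B W f).1 (b • T) x)
        (by simp) ?_ ?_ T
      · intro w₁ w₂
        rw [TB.smul_mk, boxCompAux_mk, boxCompAux_mk, hom_left]
      · intro u v hu hv
        rw [smul_add, map_add, map_add]
        simp only [LinearMap.add_apply, hu, hv, smul_add])

lemma Xi3_mk (g : BoxHomT k B W Y Z) (f : BoxHomT k B W X Y) (a : W)
    (T : TB k B W W) (x : X.carrier) :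
    Xi3 k B W g f (TB.mk k B W (TB k B W W) a T) x
      = TB.mk k B W Z.carrier a
          (boxCompAux k B W X.carrier Y.carrier Z.carrier g.1 f.1
            (boxHomT_prop k B W g).2 (boxHomT_prop k B W f).1 T x) := rfl

lemma xiMap_comp_claimA (g : BoxHomT k B W Y Z) (f : BoxHomT k B W X Y)
    (T : TB k B W W) (x : X.carrier) :
    xiMap k B W (bComp k B W D g f) T x
      = Xi3 k B W g f
          ((TB.map k B W W LinearMap.id D.μ (fun _ _ => rfl) D.μ_left) T) x := by
  refine TB.ind k B W W (p := fun T => xiMap k B W (bComp k B W D g f) T x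
      = Xi3 k B W g f
          ((TB.map k B W W LinearMap.id D.μ (fun _ _ => rfl) D.μ_left) T) x)
    (by simp) ?_ ?_ T
  · intro a b
    rw [xiMap_mk, TB.map_mk, Xi3_mk]
    rfl
  · intro u v hu hv
    rw [map_add, map_add]
    simp only [LinearMap.add_apply, map_add, hu, hv]

lemma xiMap_comp_claimB2 (g : BoxHomT k B W Y Z) (f : BoxHomT k B W X Y)
    (T' : TB k B W W) (c : W) (x : X.carrier) :
    xiMap k B W g T' (f.1 c x)
      = Xi3 k B W g f
          (TB.assocMap k B W W W (TB.mk k B (TB k B W W) W T' c)) x := by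
  refine TB.ind k B W W (p := fun T' => xiMap k B W g T' (f.1 c x)
      = Xi3 k B W g f
          (TB.assocMap k B W W W (TB.mk k B (TB k B W W) W T' c)) x) ?_ ?_ ?_ T'
  · simp
  · intro a₁ a₂
    rw [xiMap_mk, TB.assocMap_mk, Xi3_mk, boxCompAux_mk]
  · intro u v hu hv
    have : TB.mk k B (TB k B W W) W (u + v) c
        = TB.mk k B (TB k B W W) W u c + TB.mk k B (TB k B W W) W v c := by simp
    rw [map_add, this, map_add]
    simp only [LinearMap.add_apply, map_add, hu, hv]

lemma xiMap_comp_claimB (g : BoxHomT k B W Y Z) (f : BoxHomT k B W X Y)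
    (T : TB k B W W) (x : X.carrier) :
    hatf k B W D g (xiMap k B W f T x)
      = Xi3 k B W g f
          (TB.assocMap k B W W W
            ((TB.map k B W W D.μ LinearMap.id D.μ_right (fun _ _ => rfl)) T)) x := by
  refine TB.ind k B W W (p := fun T => hatf k B W D g (xiMap k B W f T x)
      = Xi3 k B W g f
          (TB.assocMap k B W W W
            ((TB.map k B W W D.μ LinearMap.id D.μ_right (fun _ _ => rfl)) T)) x)
    (by simp) ?_ ?_ T
  · intro a b
    rw [xiMap_mk, hatf_mk, TB.map_mk]
    exact xiMap_comp_claimB2 k B W g f (D.μ a) b x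
  · intro u v hu hv
    rw [map_add, map_add]
    simp only [LinearMap.add_apply, map_add, hu, hv]

/-- Functoriality: `hat (g ∘ f) = hat g ∘ hat f`. -/
lemma hatf_comp (g : BoxHomT k B W Y Z) (f : BoxHomT k B W X Y) :
    hatf k B W D (bComp k B W D g f)
      = (hatf k B W D g).comp (hatf k B W D f) := by
  apply TB.hom_ext
  intro w x
  simp only [LinearMap.comp_apply]
  rw [hatf_mk, hatf_mk, xiMap_comp_claimA, ← D.coassoc w, ← xiMap_comp_claimB]

/-- `(g ∘ f)♯ = g♯ ∘ hat f`. -/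
lemma sharp_comp (g : BoxHomT k B W Y Z) (f : BoxHomT k B W X Y) :
    sharp k B W (bComp k B W D g f) = (sharp k B W g).comp (hatf k B W D f) := by
  apply TB.hom_ext
  intro w x
  simp only [LinearMap.comp_apply]
  rw [sharp_mk, hatf_mk]
  show boxCompAux k B W X.carrier Y.carrier Z.carrier g.1 f.1
      (boxHomT_prop k B W g).2 (boxHomT_prop k B W f).1 (D.μ w) x
    = sharp k B W g (xiMap k B W f (D.μ w) x)
  refine TB.ind k B W W (p := fun T => boxCompAux k B W X.carrier Y.carrier Z.carrier g.1 f.1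
      (boxHomT_prop k B W g).2 (boxHomT_prop k B W f).1 T x
    = sharp k B W g (xiMap k B W f T x)) (by simp) ?_ ?_ (D.μ w)
  · intro a b
    rw [boxCompAux_mk, xiMap_mk, sharp_mk]
  · intro u v hu hv
    rw [map_add, map_add]
    simp only [LinearMap.add_apply, map_add, hu, hv]

lemma sharp_bId (X : BRep k B) : sharp k B W (bId k B W D X) = cMap k B W D X := by
  apply TB.hom_ext
  intro w x
  rw [sharp_mk, cMap_mk]
  show boxId k B W X.carrier D.ε w x = _
  rw [boxId_apply]

/-- Associativity of composition. -/
lemma comp_assoc {V : BRep k B} (h : BoxHomT k B W Z V) (g : BoxHomT k B W Y Z)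
    (f : BoxHomT k B W X Y) :
    bComp k B W D (bComp k B W D h g) f
      = bComp k B W D h (bComp k B W D g f) := by
  apply eq_of_sharp_eq k B W
  rw [sharp_comp, sharp_comp, sharp_comp, hatf_comp, ← LinearMap.comp_assoc]

lemma id_comp (f : BoxHomT k B W X Y) : bComp k B W D (bId k B W D Y) f = f := by
  apply eq_of_sharp_eq k B W
  rw [sharp_comp, sharp_bId, cMap_hatf]

lemma comp_id (f : BoxHomT k B W X Y) : bComp k B W D f (bId k B W D X) = f := by
  apply eq_of_sharp_eq k B W
  rw [sharp_comp, hatf_id, LinearMap.comp_id]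

end HatMachinery

/-! ### Group 3 : components -/

section Components

variable {X Y Z : BRep k B}

lemma bComp_omega (g : BoxHomT k B W Y Z) (f : BoxHomT k B W X Y) (i : Fin n)
    (x : X.carrier) :
    (bComp k B W D g f).1 (D.ω i) x = g.1 (D.ω i) (f.1 (D.ω i) x) := by
  show boxComp k B W X.carrier Y.carrier Z.carrier D.μ g.1 f.1 _ _ (D.ω i) x = _
  rw [boxComp_apply, D.ω_grouplike, boxCompAux_mk]

lemma compMap_comp (g : BoxHomT k B W Y Z) (f : BoxHomT k B W X Y) (i : Fin n) :
    compMap k B W D (bComp k B W D g f) i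
      = (compMap k B W D g i).comp (compMap k B W D f i) := by
  ext x
  show (bComp k B W D g f).1 (D.ω i) x.1 = g.1 (D.ω i) (f.1 (D.ω i) x.1)
  exact bComp_omega k B W D g f i x.1

lemma compMap_bId (X : BRep k B) (i : Fin n) :
    compMap k B W D (bId k B W D X) i = LinearMap.id := by
  ext x
  obtain ⟨x', hx'⟩ := x.2
  show (bId k B W D X).1 (D.ω i) x.1 = x.1
  have : (bId k B W D X).1 (D.ω i) x.1 = D.e i • x.1 := by
    show boxId k B W X.carrier D.ε (D.ω i) x.1 = _
    rw [boxId_apply, D.ω_counit]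
  rw [this, ← hx']
  show D.e i • actHom k B X.carrier (D.e i) x' = actHom k B X.carrier (D.e i) x'
  rw [actHom_apply, smul_smul, D.e_orth, if_pos rfl]

lemma comp_inj_elem (f : BoxHomT k B W X Y) (i : Fin n)
    (h : Function.Injective (compMap k B W D f i))
    (x : X.carrier) (hx : D.e i • x = x) (h0 : f.1 (D.ω i) x = 0) : x = 0 := by
  have hxm : x ∈ vtx k B W D X i := ⟨x, by rw [actHom_apply, hx]⟩
  have h2 : (⟨x, hxm⟩ : ↥(vtx k B W D X i)) = 0 := by
    apply h
    rw [map_zero]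
    apply Subtype.ext
    exact h0
  exact congrArg Subtype.val h2

lemma comp_surj_elem (f : BoxHomT k B W X Y) (i : Fin n)
    (h : Function.Surjective (compMap k B W D f i))
    (y : Y.carrier) (hy : D.e i • y = y) :
    ∃ x, D.e i • x = x ∧ f.1 (D.ω i) x = y := by
  obtain ⟨⟨x, hxm⟩, hfx⟩ := h ⟨y, ⟨y, by rw [actHom_apply, hy]⟩⟩
  obtain ⟨x', hx'⟩ := hxm
  refine ⟨x, ?_, congrArg Subtype.val hfx⟩
  rw [← hx', actHom_apply, smul_smul, D.e_orth, if_pos rfl]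

end Components

/-! ### Group 4 : quotient representations -/

section Quotients

open Submodule

instance quotTower (X : BRep k B) (U : Submodule B X.carrier) :
    IsScalarTower k B (X.carrier ⧸ U) := by
  constructor
  intro c b q
  refine Submodule.Quotient.induction_on _ q (fun z => ?_)
  rw [show (b : B) • (Submodule.Quotient.mk z : X.carrier ⧸ U)
        = Submodule.Quotient.mk (b • z) from (Submodule.Quotient.mk_smul U b z).symm,
    show (c : k) • (Submodule.Quotient.mk (b • z) : X.carrier ⧸ U)
        = Submodule.Quotient.mk (c • b • z) from (Submodule.Quotient.mk_smul U c _).symm,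
    show ((c • b : B)) • (Submodule.Quotient.mk z : X.carrier ⧸ U)
        = Submodule.Quotient.mk ((c • b : B) • z) from (Submodule.Quotient.mk_smul U _ z).symm,
    smul_assoc]

/-- The quotient map as a `k`-linear map. -/
noncomputable def qmk (X : BRep k B) (U : Submodule B X.carrier) :
    X.carrier →ₗ[k] (X.carrier ⧸ U) where
  toFun := Submodule.Quotient.mk
  map_add' a b := by rw [Submodule.Quotient.mk_add]
  map_smul' c x := Submodule.Quotient.mk_smul U c x

lemma qmk_apply (X : BRep k B) (U : Submodule B X.carrier) (x : X.carrier) :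
    qmk k B X U x = Submodule.Quotient.mk x := rfl

noncomputable instance quotFD (X : BRep k B) (U : Submodule B X.carrier) :
    FiniteDimensional k (X.carrier ⧸ U) :=
  Module.Finite.of_surjective (qmk k B X U) (Submodule.Quotient.mk_surjective U)

/-- The quotient representation. -/
noncomputable abbrev qRep (X : BRep k B) (U : Submodule B X.carrier) : BRep k B :=
  ⟨X.carrier ⧸ U⟩

variable (t : Fin n)

/-- The sub-bimodule generated by the top level. -/
noncomputable def topSub (X : BRep k B) : Submodule B X.carrier :=
  Submodule.span B {y | ∃ x, y = D.e t • x}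

lemma topSub_le_Vfilt (X : BRep k B) {u : X.carrier}
    (hu : u ∈ topSub k B W D t X) : u ∈ Vfilt k B W D X (t : ℕ) := by
  induction hu using Submodule.span_induction with
  | mem y hy => obtain ⟨x, rfl⟩ := hy; exact mem_Vfilt k B W D X t le_rfl x
  | zero => exact Submodule.zero_mem _
  | add a c _ _ ha hc => exact Submodule.add_mem _ ha hc
  | smul b y _ hy => exact smul_mem_Vfilt k B W D X b hy

lemma e_smul_topSub {X : BRep k B} {i : Fin n} (hi : (i : ℕ) < (t : ℕ))
    {u : X.carrier} (hu : u ∈ topSub k B W D t X) : D.e i • u = 0 :=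
  e_smul_eq_zero_of_lt k B W D X hi (topSub_le_Vfilt k B W D t X hu)

/-- The stable-set trick: elements on which all values of `f` land in `UY`. -/
noncomputable def stableSet {X Y : BRep k B} (f : BoxHomT k B W X Y)
    (UY : Submodule B Y.carrier) : Submodule B X.carrier where
  carrier := {u | ∀ w, f.1 w u ∈ UY}
  add_mem' := fun ha hb w => by rw [map_add]; exact UY.add_mem (ha w) (hb w)
  zero_mem' := fun w => by rw [map_zero]; exact UY.zero_mem
  smul_mem' := fun b u hu w => by
    rw [← hom_right k B W f b w u]; exact hu (op b • w)

lemma topSub_maps {X Y : BRep k B} (f : BoxHomT k B W X Y)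
    (htopY : Vfilt k B W D Y ((t : ℕ) + 1) = ⊥)
    {u : X.carrier} (hu : u ∈ topSub k B W D t X) (w : W) :
    f.1 w u ∈ topSub k B W D t Y := by
  have : topSub k B W D t X ≤ stableSet k B W f (topSub k B W D t Y) := by
    apply Submodule.span_le.mpr
    rintro y ⟨x, rfl⟩ w
    have hfix : D.e t • (D.e t • x) = D.e t • x := by
      rw [smul_smul, D.e_orth, if_pos rfl]
    have hdec := apply_fixed_decomp k B W D f t w (D.e t • x) hfix
    rw [htopY] at hdec
    have heq : f.1 w (D.e t • x)
        = (D.ε w * D.e t) • f.1 (D.ω t) (D.e t • x) :=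
      sub_eq_zero.mp ((Submodule.mem_bot k).mp hdec)
    rw [heq, ← omega_apply_supp k B W D f t (D.e t • x)]
    exact Submodule.smul_mem _ _ (Submodule.subset_span ⟨_, rfl⟩)
  exact this hu w

/-- Auxiliary for the induced map on quotients. -/
noncomputable def qmorAux {X Y : BRep k B} (f : BoxHomT k B W X Y)
    (htopY : Vfilt k B W D Y ((t : ℕ) + 1) = ⊥) (w : W) :
    (X.carrier ⧸ topSub k B W D t X) →ₗ[k] (Y.carrier ⧸ topSub k B W D t Y) :=
  (((topSub k B W D t X).restrictScalars k).liftQ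
      ((qmk k B Y (topSub k B W D t Y)).comp (f.1 w))
      (by
        intro u hu
        simp only [LinearMap.mem_ker, LinearMap.comp_apply, qmk_apply,
          Submodule.Quotient.mk_eq_zero]
        exact topSub_maps k B W D t f htopY hu w)).comp
    (Submodule.Quotient.restrictScalarsEquiv k (topSub k B W D t X)).symm.toLinearMap

lemma qmorAux_apply {X Y : BRep k B} (f : BoxHomT k B W X Y)
    (htopY : Vfilt k B W D Y ((t : ℕ) + 1) = ⊥) (w : W) (x : X.carrier) :
    qmorAux k B W D t f htopY w (Submodule.Quotient.mk x)
      = Submodule.Quotient.mk (f.1 w x) := rfl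

/-- The induced morphism on quotient representations. -/
noncomputable def qmor {X Y : BRep k B} (f : BoxHomT k B W X Y)
    (htopY : Vfilt k B W D Y ((t : ℕ) + 1) = ⊥) :
    BoxHomT k B W (qRep k B X (topSub k B W D t X)) (qRep k B Y (topSub k B W D t Y)) := by
  refine ⟨⟨⟨fun w => qmorAux k B W D t f htopY w, ?_⟩, ?_⟩, ?_, ?_⟩
  · intro w w'
    apply LinearMap.ext
    intro q
    refine Submodule.Quotient.induction_on _ q (fun z => ?_)
    show qmorAux k B W D t f htopY (w + w') _
      = qmorAux k B W D t f htopY w _ + qmorAux k B W D t f htopY w' _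
    rw [qmorAux_apply, qmorAux_apply, qmorAux_apply, map_add, LinearMap.add_apply,
      Submodule.Quotient.mk_add]
  · intro c w
    apply LinearMap.ext
    intro q
    refine Submodule.Quotient.induction_on _ q (fun z => ?_)
    show qmorAux k B W D t f htopY (c • w) _ = c • qmorAux k B W D t f htopY w _
    rw [qmorAux_apply, qmorAux_apply, map_smul, LinearMap.smul_apply,
      Submodule.Quotient.mk_smul]
  · intro b w q
    refine Submodule.Quotient.induction_on _ q (fun z => ?_)
    show qmorAux k B W D t f htopY (b • w) _ = b • qmorAux k B W D t f htopY w _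
    rw [qmorAux_apply, qmorAux_apply, hom_left, Submodule.Quotient.mk_smul]
  · intro b w q
    refine Submodule.Quotient.induction_on _ q (fun z => ?_)
    show qmorAux k B W D t f htopY (op b • w) _
      = qmorAux k B W D t f htopY w (b • Submodule.Quotient.mk z)
    rw [qmorAux_apply, hom_right,
      show (b : B) • (Submodule.Quotient.mk z : X.carrier ⧸ topSub k B W D t X)
        = Submodule.Quotient.mk (b • z) from (Submodule.Quotient.mk_smul _ b z).symm,
      qmorAux_apply]

lemma qmor_apply {X Y : BRep k B} (f : BoxHomT k B W X Y)
    (htopY : Vfilt k B W D Y ((t : ℕ) + 1) = ⊥) (w : W) (x : X.carrier) :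
    (qmor k B W D t f htopY).1 w (Submodule.Quotient.mk x)
      = Submodule.Quotient.mk (f.1 w x) := rfl

end Quotients

/-! ### Group 4b : components of quotient morphisms, `Mq` and its kernel -/

section QuotComponents

variable (t : Fin n) {X Y : BRep k B}

lemma vtx_fix (V : BRep k B) (i : Fin n) (a : ↥(vtx k B W D V i)) :
    D.e i • a.1 = a.1 := by
  obtain ⟨x', hx'⟩ := a.2
  rw [← hx', actHom_apply, smul_smul, D.e_orth, if_pos rfl]

lemma e_fix_fix (V : BRep k B) (i : Fin n) (z : V.carrier) :
    D.e i • (D.e i • z) = D.e i • z := by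
  rw [smul_smul, D.e_orth, if_pos rfl]

lemma q_e_fixed_zero (htopX : Vfilt k B W D X ((t : ℕ) + 1) = ⊥) {i : Fin n}
    (hi : (t : ℕ) ≤ (i : ℕ))
    (z : (qRep k B X (topSub k B W D t X)).carrier) (hz : D.e i • z = z) : z = 0 := by
  obtain ⟨x, rfl⟩ := Submodule.Quotient.mk_surjective _ z
  rw [← hz, ← Submodule.Quotient.mk_smul]
  rcases eq_or_lt_of_le hi with h | h
  · have hit : i = t := Fin.ext h.symm
    subst hit
    exact (Submodule.Quotient.mk_eq_zero _).mpr
      (Submodule.subset_span ⟨x, rfl⟩)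
  · have h0 : D.e i • x = 0 := by
      have hmem : D.e i • x ∈ Vfilt k B W D X ((t : ℕ) + 1) :=
        mem_Vfilt k B W D X i (by omega) x
      rw [htopX] at hmem
      simpa using hmem
    rw [h0]
    exact Submodule.Quotient.mk_zero _

lemma qmor_comp_bijective (f : BoxHomT k B W X Y)
    (htopX : Vfilt k B W D X ((t : ℕ) + 1) = ⊥)
    (htopY : Vfilt k B W D Y ((t : ℕ) + 1) = ⊥)
    (hbij : ∀ i, Function.Bijective (compMap k B W D f i)) (i : Fin n) :
    Function.Bijective (compMap k B W D (qmor k B W D t f htopY) i) := by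
  have key : ∀ z : (qRep k B X (topSub k B W D t X)).carrier, D.e i • z = z →
      (qmor k B W D t f htopY).1 (D.ω i) z = 0 → z = 0 := by
    intro z hz h0
    by_cases hi : (t : ℕ) ≤ (i : ℕ)
    · exact q_e_fixed_zero k B W D t htopX hi z hz
    · push_neg at hi
      obtain ⟨x₀, rfl⟩ := Submodule.Quotient.mk_surjective _ z
      rw [← hz, ← Submodule.Quotient.mk_smul] at h0 ⊢
      rw [qmor_apply] at h0
      have hvmem : f.1 (D.ω i) (D.e i • x₀) ∈ topSub k B W D t Y :=
        (Submodule.Quotient.mk_eq_zero _).mp h0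
      have hv0 : f.1 (D.ω i) (D.e i • x₀) = 0 := by
        rw [← omega_apply_supp k B W D f i (D.e i • x₀)]
        exact e_smul_topSub k B W D t hi hvmem
      have : D.e i • x₀ = 0 :=
        comp_inj_elem k B W D f i (hbij i).1 (D.e i • x₀)
          (e_fix_fix k B W D X i x₀) hv0
      rw [this]
      exact Submodule.Quotient.mk_zero _
  constructor
  · intro a b hab
    apply Subtype.ext
    have h1 : D.e i • (a.1 - b.1) = a.1 - b.1 := by
      rw [smul_sub, vtx_fix, vtx_fix]
    have h2 : (qmor k B W D t f htopY).1 (D.ω i) (a.1 - b.1) = 0 := by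
      have hval : (qmor k B W D t f htopY).1 (D.ω i) a.1
          = (qmor k B W D t f htopY).1 (D.ω i) b.1 := congrArg Subtype.val hab
      rw [map_sub, sub_eq_zero]
      exact hval
    have := key _ h1 h2
    exact sub_eq_zero.mp this
  · intro b
    by_cases hi : (t : ℕ) ≤ (i : ℕ)
    · refine ⟨0, ?_⟩
      apply Subtype.ext
      rw [map_zero]
      exact (q_e_fixed_zero k B W D t htopY hi b.1 (vtx_fix k B W D _ i b)).symm
    · push_neg at hi
      obtain ⟨y₀, hy₀⟩ := Submodule.Quotient.mk_surjective _ b.1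
      obtain ⟨x, hxfix, hfx⟩ := comp_surj_elem k B W D f i (hbij i).2 (D.e i • y₀)
        (e_fix_fix k B W D Y i y₀)
      have hmkx : D.e i • (Submodule.Quotient.mk x :
          (qRep k B X (topSub k B W D t X)).carrier) = Submodule.Quotient.mk x := by
        rw [← Submodule.Quotient.mk_smul, hxfix]
      refine ⟨⟨Submodule.Quotient.mk x, ⟨Submodule.Quotient.mk x, by
        rw [actHom_apply]; exact hmkx⟩⟩, ?_⟩
      apply Subtype.ext
      show (qmor k B W D t f htopY).1 (D.ω i) (Submodule.Quotient.mk x) = b.1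
      rw [qmor_apply, hfx, Submodule.Quotient.mk_smul, hy₀]
      exact vtx_fix k B W D _ i b

end QuotComponents

/-! ### Group 4c : `Mq`, its kernel, and naturality -/

section MqSection

variable (t : Fin n) {X Y : BRep k B}

lemma qRep_Vfilt_top (htopX : Vfilt k B W D X ((t : ℕ) + 1) = ⊥) :
    Vfilt k B W D (qRep k B X (topSub k B W D t X)) (t : ℕ) = ⊥ := by
  apply Submodule.span_eq_bot.mpr
  rintro y ⟨i, hi, z, rfl⟩
  exact q_e_fixed_zero k B W D t htopX hi _ (e_fix_fix k B W D _ i z)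

/-- `M` applied to the quotient map. -/
noncomputable def Mq (X : BRep k B) (U : Submodule B X.carrier) :
    TB k B W X.carrier →ₗ[k] TB k B W (X.carrier ⧸ U) :=
  TB.map k B W X.carrier LinearMap.id (qmk k B X U) (fun _ _ => rfl)
    (fun b x => Submodule.Quotient.mk_smul U b x)

lemma Mq_mk (X : BRep k B) (U : Submodule B X.carrier) (w : W) (x : X.carrier) :
    Mq k B W X U (TB.mk k B W X.carrier w x)
      = TB.mk k B W (X.carrier ⧸ U) w (Submodule.Quotient.mk x) := rfl

lemma Mq_surjective (X : BRep k B) (U : Submodule B X.carrier) :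
    Function.Surjective (Mq k B W X U) := by
  intro v
  refine TB.ind k B W (X.carrier ⧸ U) (p := fun v => ∃ u, Mq k B W X U u = v)
    ⟨0, map_zero _⟩ ?_ ?_ v
  · intro w q
    obtain ⟨x, rfl⟩ := Submodule.Quotient.mk_surjective _ q
    exact ⟨TB.mk k B W X.carrier w x, rfl⟩
  · rintro a c ⟨u, rfl⟩ ⟨u', rfl⟩
    exact ⟨u + u', map_add _ _ _⟩

/-- The span of top-level elementary tensors. -/
noncomputable def Ktop (X : BRep k B) : Submodule k (TB k B W X.carrier) :=
  Submodule.span k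
    {u | ∃ w x, D.e t • x = x ∧ u = TB.mk k B W X.carrier w x}

lemma mk_topSub_mem_Ktop {u : X.carrier} (hu : u ∈ topSub k B W D t X) (w : W) :
    TB.mk k B W X.carrier w u ∈ Ktop k B W D t X := by
  let SB : Submodule B X.carrier :=
    { carrier := {u | ∀ w, TB.mk k B W X.carrier w u ∈ Ktop k B W D t X}
      add_mem' := fun ha hb w => by
        rw [map_add]; exact Submodule.add_mem _ (ha w) (hb w)
      zero_mem' := fun w => by rw [map_zero]; exact Submodule.zero_mem _
      smul_mem' := fun b u hu w => by
        rw [← TB.mk_balance]; exact hu (op b • w) }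
  have hle : topSub k B W D t X ≤ SB := by
    apply Submodule.span_le.mpr
    rintro y ⟨x, rfl⟩ w
    exact Submodule.subset_span ⟨w, D.e t • x, e_fix_fix k B W D X t x, rfl⟩
  exact hle hu w

lemma Ktop_le_ker :
    Ktop k B W D t X ≤ LinearMap.ker (Mq k B W X (topSub k B W D t X)) := by
  apply Submodule.span_le.mpr
  rintro u ⟨w, x, hx, rfl⟩
  simp only [SetLike.mem_coe, LinearMap.mem_ker, Mq_mk]
  have : (Submodule.Quotient.mk x : X.carrier ⧸ topSub k B W D t X) = 0 :=
    (Submodule.Quotient.mk_eq_zero _).mpr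
      (Submodule.subset_span ⟨x, hx.symm⟩)
  rw [this, map_zero]

/-- The inverse comparison map on quotients. -/
noncomputable def PhiQ (X : BRep k B) :
    TB k B W (X.carrier ⧸ topSub k B W D t X) →ₗ[k]
      (TB k B W X.carrier ⧸ Ktop k B W D t X) := by
  set U := topSub k B W D t X
  have hker : ∀ w : W, (U.restrictScalars k) ≤ LinearMap.ker
      ((Ktop k B W D t X).mkQ.comp (TB.mk k B W X.carrier w)) := by
    intro w u hu
    simp only [LinearMap.mem_ker, LinearMap.comp_apply, Submodule.mkQ_apply,
      Submodule.Quotient.mk_eq_zero]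
    exact mk_topSub_mem_Ktop k B W D t hu w
  let F : W → (X.carrier ⧸ U) →ₗ[k] (TB k B W X.carrier ⧸ Ktop k B W D t X) := fun w =>
    ((U.restrictScalars k).liftQ
        ((Ktop k B W D t X).mkQ.comp (TB.mk k B W X.carrier w)) (hker w)).comp
      (Submodule.Quotient.restrictScalarsEquiv k U).symm.toLinearMap
  have Fapp : ∀ w x, F w (Submodule.Quotient.mk x)
      = Submodule.Quotient.mk (TB.mk k B W X.carrier w x) := fun w x => rfl
  refine TB.lift k B W (X.carrier ⧸ U) ⟨⟨fun w => F w, ?_⟩, ?_⟩ ?_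
  · intro w w'
    apply LinearMap.ext
    intro q
    refine Submodule.Quotient.induction_on _ q (fun z => ?_)
    show F (w + w') _ = F w _ + F w' _
    rw [Fapp, Fapp, Fapp]
    rw [show TB.mk k B W X.carrier (w + w') z
        = TB.mk k B W X.carrier w z + TB.mk k B W X.carrier w' z by simp]
    rw [Submodule.Quotient.mk_add]
  · intro c w
    apply LinearMap.ext
    intro q
    refine Submodule.Quotient.induction_on _ q (fun z => ?_)
    show F (c • w) _ = c • F w _
    rw [Fapp, Fapp]
    rw [show TB.mk k B W X.carrier (c • w) z = c • TB.mk k B W X.carrier w z by simp]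
    rw [Submodule.Quotient.mk_smul]
  · intro b w q
    refine Submodule.Quotient.induction_on _ q (fun z => ?_)
    show F (op b • w) _ = F w (b • Submodule.Quotient.mk z)
    rw [Fapp,
      show (b : B) • (Submodule.Quotient.mk z : X.carrier ⧸ U)
        = Submodule.Quotient.mk (b • z) from (Submodule.Quotient.mk_smul U b z).symm,
      Fapp, TB.mk_balance]

lemma PhiQ_Mq (X : BRep k B) (u : TB k B W X.carrier) :
    PhiQ k B W D t X (Mq k B W X (topSub k B W D t X) u)
      = (Ktop k B W D t X).mkQ u := by
  have : (PhiQ k B W D t X).comp (Mq k B W X (topSub k B W D t X))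
      = (Ktop k B W D t X).mkQ := by
    apply TB.hom_ext
    intro w x
    rfl
  exact LinearMap.congr_fun this u

lemma ker_Mq_le (X : BRep k B) (u : TB k B W X.carrier)
    (hu : Mq k B W X (topSub k B W D t X) u = 0) : u ∈ Ktop k B W D t X := by
  have := PhiQ_Mq k B W D t X u
  rw [hu, map_zero] at this
  exact (Submodule.Quotient.mk_eq_zero _).mp
    (by rw [← Submodule.mkQ_apply]; exact this.symm)

/-- Naturality of `hat` with respect to quotients. -/
lemma Mq_hatf (f : BoxHomT k B W X Y)
    (htopY : Vfilt k B W D Y ((t : ℕ) + 1) = ⊥) :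
    (Mq k B W Y (topSub k B W D t Y)).comp (hatf k B W D f)
      = (hatf k B W D (qmor k B W D t f htopY)).comp
          (Mq k B W X (topSub k B W D t X)) := by
  apply TB.hom_ext
  intro w x
  show Mq k B W Y (topSub k B W D t Y) (xiMap k B W f (D.μ w) x)
    = xiMap k B W (qmor k B W D t f htopY) (D.μ w) (Submodule.Quotient.mk x)
  refine TB.ind k B W W (p := fun T =>
      Mq k B W Y (topSub k B W D t Y) (xiMap k B W f T x)
        = xiMap k B W (qmor k B W D t f htopY) T (Submodule.Quotient.mk x))
    (by simp) ?_ ?_ (D.μ w)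
  · intro a b
    rw [xiMap_mk, xiMap_mk, Mq_mk, qmor_apply]
  · intro u v hu hv
    rw [map_add, map_add]
    simp only [LinearMap.add_apply, map_add, hu, hv]

end MqSection

/-! ### Group 5 : top-level lemmas and the left-inverse construction -/

section TopLevel

variable (t : Fin n) {X Y : BRep k B}

lemma hatf_mk_top (f : BoxHomT k B W X Y)
    (htopY : Vfilt k B W D Y ((t : ℕ) + 1) = ⊥) (w : W) (x : X.carrier)
    (hx : D.e t • x = x) :
    hatf k B W D f (TB.mk k B W X.carrier w x)
      = TB.mk k B W Y.carrier w (f.1 (D.ω t) x) := by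
  rw [hatf_mk]
  have inner : ∀ T : TB k B W W, xiMap k B W f T x
      = TB.mk k B W Y.carrier
          (op (D.e t) • counitRightMap k B W D.ε D.ε_left T) (f.1 (D.ω t) x) := by
    intro T
    refine TB.ind k B W W (p := fun T => xiMap k B W f T x
      = TB.mk k B W Y.carrier
          (op (D.e t) • counitRightMap k B W D.ε D.ε_left T) (f.1 (D.ω t) x))
      (by simp) ?_ ?_ T
    · intro a b
      rw [xiMap_mk, counitRightMap_mk]
      have hdec := apply_fixed_decomp k B W D f t b x hx
      rw [htopY] at hdec
      have heq : f.1 b x = (D.ε b * D.e t) • f.1 (D.ω t) x :=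
        sub_eq_zero.mp ((Submodule.mem_bot k).mp hdec)
      rw [heq, ← TB.mk_balance, smul_smul, ← MulOpposite.op_mul]
    · intro u v hu hv
      simp only [map_add, LinearMap.add_apply, smul_add, hu, hv]
  rw [inner (D.μ w), D.counit_r, TB.mk_balance, omega_apply_supp]

lemma cMap_Ktop_fix (htopX : Vfilt k B W D X ((t : ℕ) + 1) = ⊥)
    {u : TB k B W X.carrier} (hu : u ∈ Ktop k B W D t X) :
    D.e t • cMap k B W D X u = cMap k B W D X u := by
  have he : D.e t * D.e t = D.e t := by rw [D.e_orth, if_pos rfl]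
  induction hu using Submodule.span_induction with
  | mem y hy =>
    obtain ⟨w, x, hx, rfl⟩ := hy
    rw [cMap_mk, smul_top_fixed k B W D X t htopX (D.ε w) x hx, smul_smul,
      show D.e t * (D.e t * D.ε w * D.e t) = D.e t * D.ε w * D.e t by
        rw [← mul_assoc, ← mul_assoc, he]]
  | zero => simp
  | add a c _ _ ha hc => rw [map_add, smul_add, ha, hc]
  | smul c y _ hy => rw [map_smul, smul_comm, hy]

lemma sharp_Ktop (f : BoxHomT k B W X Y)
    (htopY : Vfilt k B W D Y ((t : ℕ) + 1) = ⊥)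
    {u : TB k B W X.carrier} (hu : u ∈ Ktop k B W D t X) :
    sharp k B W f u = f.1 (D.ω t) (cMap k B W D X u) := by
  induction hu using Submodule.span_induction with
  | mem y hy =>
    obtain ⟨w, x, hx, rfl⟩ := hy
    rw [sharp_mk, cMap_mk]
    have hdec := apply_fixed_decomp k B W D f t w x hx
    rw [htopY] at hdec
    have heq : f.1 w x = (D.ε w * D.e t) • f.1 (D.ω t) x :=
      sub_eq_zero.mp ((Submodule.mem_bot k).mp hdec)
    have hx' : D.ε w • x = (D.ε w * D.e t) • x := by
      conv_lhs => rw [← hx]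
      rw [smul_smul]
    rw [heq, hx', component_commute k B W D f t htopY (D.ε w * D.e t) x hx]
  | zero => simp
  | add a c _ _ ha hc => rw [map_add, map_add, ha, hc, map_add]
  | smul c y _ hy => rw [map_smul, map_smul, hy, map_smul]

/-- Kernel of `hat f` is contained in the kernel of the counit (inductive step form). -/
lemma hat_ker_cMap (f : BoxHomT k B W X Y)
    (htopX : Vfilt k B W D X ((t : ℕ) + 1) = ⊥)
    (htopY : Vfilt k B W D Y ((t : ℕ) + 1) = ⊥)
    (hbij : ∀ i, Function.Bijective (compMap k B W D f i))
    (hinj : Function.Injective (hatf k B W D (qmor k B W D t f htopY)))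
    (u : TB k B W X.carrier) (hu : hatf k B W D f u = 0) :
    cMap k B W D X u = 0 := by
  have h1 : Mq k B W X (topSub k B W D t X) u = 0 := by
    apply hinj
    rw [map_zero]
    have hnat : Mq k B W Y (topSub k B W D t Y) (hatf k B W D f u)
        = hatf k B W D (qmor k B W D t f htopY)
            (Mq k B W X (topSub k B W D t X) u) :=
      LinearMap.congr_fun (Mq_hatf k B W D t f htopY) u
    rw [← hnat, hu, map_zero]
  have h2 : u ∈ Ktop k B W D t X := ker_Mq_le k B W D t X u h1
  have h3 : f.1 (D.ω t) (cMap k B W D X u) = 0 := by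
    rw [← sharp_Ktop k B W D t f htopY h2]
    have h4 : cMap k B W D Y (hatf k B W D f u) = sharp k B W f u :=
      LinearMap.congr_fun (cMap_hatf k B W D f) u
    rw [← h4, hu, map_zero]
  exact comp_inj_elem k B W D f t (hbij t).1 _
    (cMap_Ktop_fix k B W D t htopX h2) h3

/-- Surjectivity of `hat f` (inductive step form). -/
lemma hat_surj (f : BoxHomT k B W X Y)
    (htopY : Vfilt k B W D Y ((t : ℕ) + 1) = ⊥)
    (hbij : ∀ i, Function.Bijective (compMap k B W D f i))
    (hsurjq : Function.Surjective (hatf k B W D (qmor k B W D t f htopY))) :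
    Function.Surjective (hatf k B W D f) := by
  intro v
  obtain ⟨ub, hub⟩ := hsurjq (Mq k B W Y (topSub k B W D t Y) v)
  obtain ⟨u₁, rfl⟩ := Mq_surjective k B W X (topSub k B W D t X) ub
  have hker0 : Mq k B W Y (topSub k B W D t Y) (v - hatf k B W D f u₁) = 0 := by
    rw [map_sub]
    have hnat : Mq k B W Y (topSub k B W D t Y) (hatf k B W D f u₁)
        = hatf k B W D (qmor k B W D t f htopY)
            (Mq k B W X (topSub k B W D t X) u₁) :=
      LinearMap.congr_fun (Mq_hatf k B W D t f htopY) u₁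
    rw [hnat, hub, sub_self]
  have hK : v - hatf k B W D f u₁ ∈ Ktop k B W D t Y :=
    ker_Mq_le k B W D t Y _ hker0
  have hrange : ∀ z, z ∈ Ktop k B W D t Y → z ∈ LinearMap.range (hatf k B W D f) := by
    intro z hz
    induction hz using Submodule.span_induction with
    | mem y hy =>
      obtain ⟨w, y', hy', rfl⟩ := hy
      obtain ⟨x, hxfix, hfx⟩ := comp_surj_elem k B W D f t (hbij t).2 y' hy'
      exact ⟨TB.mk k B W X.carrier w x, by
        rw [hatf_mk_top k B W D t f htopY w x hxfix, hfx]⟩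
    | zero => exact Submodule.zero_mem _
    | add a c _ _ ha hc => exact Submodule.add_mem _ ha hc
    | smul c y _ hy => exact Submodule.smul_mem _ c hy
  obtain ⟨u₂, hu₂⟩ := hrange _ hK
  exact ⟨u₁ + u₂, by rw [map_add, hu₂]; abel⟩

/-- Construction of a left inverse from surjectivity of `hat f` and the
kernel condition. -/
lemma left_inverse_exists (f : BoxHomT k B W X Y)
    (hsurj : Function.Surjective (hatf k B W D f))
    (hkerc : ∀ u, hatf k B W D f u = 0 → cMap k B W D X u = 0) :
    ∃ g : BoxHomT k B W Y X, bComp k B W D g f = bId k B W D X := by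
  obtain ⟨s, hs⟩ := (hatf k B W D f).exists_rightInverse_of_surjective
    (LinearMap.range_eq_top.mpr hsurj)
  set G := (cMap k B W D X).comp s with hG
  have hGhat : ∀ u, G (hatf k B W D f u) = cMap k B W D X u := by
    intro u
    have h1 : hatf k B W D f (s (hatf k B W D f u)) = hatf k B W D f u :=
      LinearMap.congr_fun hs (hatf k B W D f u)
    have h0 : hatf k B W D f (s (hatf k B W D f u) - u) = 0 := by
      rw [map_sub, h1, sub_self]
    have h2 := hkerc _ h0
    rw [map_sub] at h2
    simp only [hG, LinearMap.comp_apply]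
    exact sub_eq_zero.mp h2
  have hGsmul : ∀ (b : B) v, G (b • v) = b • G v := by
    intro b v
    obtain ⟨u, rfl⟩ := hsurj v
    rw [← hatf_bsmul, hGhat, hGhat, cMap_bsmul]
  let gl : W →ₗ[k] Y.carrier →ₗ[k] X.carrier :=
    LinearMap.mk₂ k (fun w y => G (TB.mk k B W Y.carrier w y))
      (fun w w' y => by simp only [map_add, LinearMap.add_apply])
      (fun c w y => by simp only [map_smul, LinearMap.smul_apply])
      (fun w y y' => by simp only [map_add])
      (fun c w y => by simp only [map_smul])
  have glbox : IsBoxHom k B W Y.carrier X.carrier gl := by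
    constructor
    · intro b w y
      show G (TB.mk k B W Y.carrier (b • w) y) = b • G (TB.mk k B W Y.carrier w y)
      rw [← TB.smul_mk, hGsmul]
    · intro b w y
      show G (TB.mk k B W Y.carrier (op b • w) y) = G (TB.mk k B W Y.carrier w (b • y))
      rw [TB.mk_balance]
  refine ⟨⟨gl, glbox⟩, ?_⟩
  apply eq_of_sharp_eq k B W
  have hsharp : sharp k B W (⟨gl, glbox⟩ : BoxHomT k B W Y X) = G := by
    apply TB.hom_ext
    intro w y
    rfl
  rw [sharp_comp, sharp_bId, hsharp]
  apply LinearMap.ext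
  intro u
  simp only [LinearMap.comp_apply]
  exact hGhat u

end TopLevel

/-! ### Group 6 : the induction and the main result -/

section Induction

lemma inv_of_bot {X Y : BRep k B} (f : BoxHomT k B W X Y)
    (hX : Vfilt k B W D X 0 = ⊥) (hY : Vfilt k B W D Y 0 = ⊥) :
    ∃ g : BoxHomT k B W Y X,
      bComp k B W D g f = bId k B W D X ∧ bComp k B W D f g = bId k B W D Y := by
  have hzX := eq_zero_of_Vfilt_zero k B W D X hX
  have hzY := eq_zero_of_Vfilt_zero k B W D Y hY
  refine ⟨0, ?_, ?_⟩
  · apply Subtype.ext; apply LinearMap.ext; intro w; apply LinearMap.ext; intro x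
    exact (hzX _).trans (hzX _).symm
  · apply Subtype.ext; apply LinearMap.ext; intro w; apply LinearMap.ext; intro y
    exact (hzY _).trans (hzY _).symm

lemma main_induction : ∀ L : ℕ, L ≤ n →
    ∀ (X Y : BRep k B) (f : BoxHomT k B W X Y),
      Vfilt k B W D X L = ⊥ → Vfilt k B W D Y L = ⊥ →
      (∀ i, Function.Bijective (compMap k B W D f i)) →
      ∃ g : BoxHomT k B W Y X,
        bComp k B W D g f = bId k B W D X ∧ bComp k B W D f g = bId k B W D Y := by
  intro L
  induction L with
  | zero =>
    intro _ X Y f hX hY _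
    exact inv_of_bot k B W D f hX hY
  | succ L IH =>
    intro hLn X Y f hX hY hbij
    set t : Fin n := ⟨L, by omega⟩ with ht
    have leftinv : ∀ (X Y : BRep k B) (f : BoxHomT k B W X Y),
        Vfilt k B W D X (L + 1) = ⊥ → Vfilt k B W D Y (L + 1) = ⊥ →
        (∀ i, Function.Bijective (compMap k B W D f i)) →
        ∃ g : BoxHomT k B W Y X, bComp k B W D g f = bId k B W D X := by
      intro X Y f hX hY hbij
      have htX : Vfilt k B W D X ((t : ℕ) + 1) = ⊥ := hX
      have htY : Vfilt k B W D Y ((t : ℕ) + 1) = ⊥ := hY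
      have hqX : Vfilt k B W D (qRep k B X (topSub k B W D t X)) L = ⊥ :=
        qRep_Vfilt_top k B W D t htX
      have hqY : Vfilt k B W D (qRep k B Y (topSub k B W D t Y)) L = ⊥ :=
        qRep_Vfilt_top k B W D t htY
      have hqbij := qmor_comp_bijective k B W D t f htX htY hbij
      obtain ⟨gq, hgq1, hgq2⟩ := IH (by omega) _ _ (qmor k B W D t f htY) hqX hqY hqbij
      have hid1 : (hatf k B W D gq).comp (hatf k B W D (qmor k B W D t f htY))
          = LinearMap.id := by
        rw [← hatf_comp, hgq1, hatf_id]
      have hid2 : (hatf k B W D (qmor k B W D t f htY)).comp (hatf k B W D gq)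
          = LinearMap.id := by
        rw [← hatf_comp, hgq2, hatf_id]
      have hinj : Function.Injective (hatf k B W D (qmor k B W D t f htY)) := by
        have hli : Function.LeftInverse (hatf k B W D gq)
            (hatf k B W D (qmor k B W D t f htY)) :=
          fun u => LinearMap.congr_fun hid1 u
        exact hli.injective
      have hsurjq : Function.Surjective (hatf k B W D (qmor k B W D t f htY)) := by
        have hri : Function.RightInverse (hatf k B W D gq)
            (hatf k B W D (qmor k B W D t f htY)) :=
          fun u => LinearMap.congr_fun hid2 u
        exact hri.surjective
      exact left_inverse_exists k B W D f
        (hat_surj k B W D t f htY hbij hsurjq)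
        (hat_ker_cMap k B W D t f htX htY hbij hinj)
    obtain ⟨g, hg⟩ := leftinv X Y f hX hY hbij
    have hgbij : ∀ i, Function.Bijective (compMap k B W D g i) := by
      intro i
      have hcomp : (compMap k B W D g i).comp (compMap k B W D f i) = LinearMap.id := by
        rw [← compMap_comp, hg, compMap_bId]
      have hli : Function.LeftInverse (compMap k B W D g i) (compMap k B W D f i) :=
        fun u => LinearMap.congr_fun hcomp u
      constructor
      · intro a b hab
        obtain ⟨a', rfl⟩ := (hbij i).2 a
        obtain ⟨b', rfl⟩ := (hbij i).2 b
        have : a' = b' := (hli a').symm.trans (hab.trans (hli b'))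
        rw [this]
      · intro b
        exact ⟨compMap k B W D f i b, hli b⟩
    obtain ⟨h, hh⟩ := leftinv Y X g hY hX hgbij
    have hf : h = f := by
      have e1 : bComp k B W D h (bComp k B W D g f) = h := by
        rw [hg, comp_id]
      have e2 : bComp k B W D (bComp k B W D h g) f = f := by
        rw [hh, id_comp]
      rw [comp_assoc, e1] at e2
      exact e2
    refine ⟨g, hg, ?_⟩
    rw [← hf]
    exact hh

end Induction

end S12

/-- For a box `𝔅 = (B, W)` arising from the directed dg
construction, a morphism `f : X → Y` in `𝔅-mod` is an isomorphism if and only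
if each component `f_i : X(i) → Y(i)` is an isomorphism of `k`-vector
spaces. -/
theorem box_morphism_iso_iff_components_iso
    (k B : Type) [Field k] [Ring B] [Algebra k B]
    (W : Type) [AddCommGroup W] [Module k W] [Module B W] [Module Bᵐᵒᵖ W]
    [IsScalarTower k B W] [IsScalarTower k Bᵐᵒᵖ W] [SMulCommClass B Bᵐᵒᵖ W]
    {n m : ℕ} (D : DirectedDGBox k B W n m)
    {X Y : BRep k B} (f : BoxHomT k B W X Y) :
    (∃ g : BoxHomT k B W Y X,
      bComp k B W D g f = bId k B W D X ∧ bComp k B W D f g = bId k B W D Y)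
    ↔ ∀ i, Function.Bijective (compMap k B W D f i) := by
  constructor
  · rintro ⟨g, hg1, hg2⟩ i
    have h1 : (compMap k B W D g i).comp (compMap k B W D f i) = LinearMap.id := by
      rw [← S12.compMap_comp, hg1, S12.compMap_bId]
    have h2 : (compMap k B W D f i).comp (compMap k B W D g i) = LinearMap.id := by
      rw [← S12.compMap_comp, hg2, S12.compMap_bId]
    constructor
    · exact Function.LeftInverse.injective
        (g := compMap k B W D g i) (fun u => LinearMap.congr_fun h1 u)
    · exact Function.RightInverse.surjective
        (g := compMap k B W D g i) (fun u => LinearMap.congr_fun h2 u)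
  · intro hbij
    have hXn : S12.Vfilt k B W D X n = ⊥ := by
      apply Submodule.span_eq_bot.mpr
      rintro y ⟨i, hi, x, rfl⟩
      exact absurd i.isLt (by omega)
    have hYn : S12.Vfilt k B W D Y n = ⊥ := by
      apply Submodule.span_eq_bot.mpr
      rintro y ⟨i, hi, x, rfl⟩
      exact absurd i.isLt (by omega)
    exact S12.main_induction k B W D n le_rfl X Y f hXn hYn hbij
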